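/- arXiv:2408.07572 — 2 statements merged into one kernel-verified Lean document; each statement's English description precedes it below -/
import Mathlib

section
/- Let (Ω₂,ℙ₂) be a probability space, let (W_n) be a sequence of P-variables W_n : [0,1] × [0,1] × Ω₂ → ℝ ([0,1] with Lebesgue measure), and let (W̃_n) be the sequence of associated probability graphons. If (W̃_n) is a Cauchy sequence with respect to the unlabelled cut distance δ_□, then (W_n) is a Cauchy sequence with respect to the P-variables metric d_M. -/
set_option autoImplicit false

open MeasureTheory Set
open scoped ENNReal NNReal

noncomputable section

/-- `ℝ^n` with the Euclidean metric. -/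
abbrev RE (n : ℕ) : Type := EuclideanSpace ℝ (Fin n)

/-- The random vector `(f₁(x₁), f₁(x₂), …, f_k(x₁), f_k(x₂), W(x₁,x₂,x₁₂))`. -/
def sVec {Ω₁ Ω₂ : Type*} (k : ℕ) (f : Fin k → Ω₁ → ℝ)
    (W : Ω₁ × Ω₁ × Ω₂ → ℝ) (x : Ω₁ × Ω₁ × Ω₂) : RE (2 * k + 1) :=
  (WithLp.equiv 2 (Fin (2 * k + 1) → ℝ)).symm fun i =>
    if _ : (i : ℕ) < 2 * k then
      if (i : ℕ) % 2 = 0 then f ⟨(i : ℕ) / 2, by omega⟩ x.1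
      else f ⟨(i : ℕ) / 2, by omega⟩ x.2.1
    else W x

/-- `S(f₁,…,f_k,W)`: the pushforward of the product measure `P₁ ⊗ P₁ ⊗ P₂` under `sVec`. -/
def Smeasure {Ω₁ Ω₂ : Type*} [MeasurableSpace Ω₁] [MeasurableSpace Ω₂]
    (P₁ : Measure Ω₁) (P₂ : Measure Ω₂) {k : ℕ} (f : Fin k → Ω₁ → ℝ)
    (W : Ω₁ × Ω₁ × Ω₂ → ℝ) : Measure (RE (2 * k + 1)) :=
  (P₁.prod (P₁.prod P₂)).map (sVec k f W)

/-- The `k`-profile `S_k(W)`. -/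
def SkSet {Ω₁ Ω₂ : Type*} [MeasurableSpace Ω₁] [MeasurableSpace Ω₂]
    (P₁ : Measure Ω₁) (P₂ : Measure Ω₂) (k : ℕ)
    (W : Ω₁ × Ω₁ × Ω₂ → ℝ) : Set (Measure (RE (2 * k + 1))) :=
  {μ | ∃ f : Fin k → Ω₁ → ℝ, (∀ i, Measurable (f i)) ∧
    (∀ i x, f i x ∈ Icc (-1 : ℝ) 1) ∧ μ = Smeasure P₁ P₂ f W}

/-- A function partition: `{0,1}`-valued measurable functions summing to `1`. -/
def IsFunctionPartition {Ω₁ : Type*} [MeasurableSpace Ω₁] {k : ℕ}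
    (f : Fin k → Ω₁ → ℝ) : Prop :=
  (∀ i, Measurable (f i)) ∧ (∀ i x, f i x = 0 ∨ f i x = 1) ∧ ∀ x, ∑ i, f i x = 1

/-- The restricted `k`-profile `S'_k(W)`. -/
def SkSet' {Ω₁ Ω₂ : Type*} [MeasurableSpace Ω₁] [MeasurableSpace Ω₂]
    (P₁ : Measure Ω₁) (P₂ : Measure Ω₂) (k : ℕ)
    (W : Ω₁ × Ω₁ × Ω₂ → ℝ) : Set (Measure (RE (2 * k + 1))) :=
  {μ | ∃ f : Fin k → Ω₁ → ℝ, IsFunctionPartition f ∧ μ = Smeasure P₁ P₂ f W}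

/-- Hausdorff edistance (w.r.t. the Lévy–Prokhorov distance) between sets of measures. -/
def eHausLP {X : Type*} [MeasurableSpace X] [PseudoEMetricSpace X]
    (A B : Set (Measure X)) : ℝ≥0∞ :=
  max (⨆ μ ∈ A, ⨅ ν ∈ B, levyProkhorovEDist μ ν)
      (⨆ ν ∈ B, ⨅ μ ∈ A, levyProkhorovEDist μ ν)

/-- Hausdorff distance (w.r.t. the Lévy–Prokhorov distance) between sets of measures. -/
def dHLP {X : Type*} [MeasurableSpace X] [PseudoEMetricSpace X]
    (A B : Set (Measure X)) : ℝ := (eHausLP A B).toReal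

/-- A `P`-variable: a measurable real-valued function on a product `Ω₁ × Ω₁ × Ω₂`
of probability spaces. -/
structure PVar where
  (Ω₁ : Type*)
  (Ω₂ : Type*)
  [m₁ : MeasurableSpace Ω₁]
  [m₂ : MeasurableSpace Ω₂]
  (P₁ : Measure Ω₁)
  (P₂ : Measure Ω₂)
  (prob₁ : IsProbabilityMeasure P₁)
  (prob₂ : IsProbabilityMeasure P₂)
  (W : Ω₁ × Ω₁ × Ω₂ → ℝ)
  (meas : Measurable W)

attribute [instance] PVar.m₁ PVar.m₂

/-- The underlying product probability measure of a `P`-variable. -/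
def PVar.vol (V : PVar) : Measure (V.Ω₁ × V.Ω₁ × V.Ω₂) := V.P₁.prod (V.P₁.prod V.P₂)

/-- The `k`-profile of a `P`-variable. -/
def PVar.Sk (V : PVar) (k : ℕ) : Set (Measure (RE (2 * k + 1))) := SkSet V.P₁ V.P₂ k V.W

/-- The restricted `k`-profile of a `P`-variable. -/
def PVar.Sk' (V : PVar) (k : ℕ) : Set (Measure (RE (2 * k + 1))) := SkSet' V.P₁ V.P₂ k V.W

/-- The `P`-variables metric `d_M`. -/
def dM (V U : PVar) : ℝ :=
  ∑' k : ℕ, (2 : ℝ)⁻¹ ^ (k + 1) * dHLP (V.Sk (k + 1)) (U.Sk (k + 1))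


/-- The probability graphon (Markov kernel `[0,1]² → 𝒫(ℝ)`) associated to a
P-variable on `[0,1] × [0,1] × Ω₂`: `W̃(x₁,x₂;·)` is the law of `W(x₁,x₂,·)`. -/
def assocGraphon {Ω₂ : Type*} [MeasurableSpace Ω₂] (P₂ : Measure Ω₂)
    (W : unitInterval × unitInterval × Ω₂ → ℝ)
    (x : unitInterval × unitInterval) : Measure ℝ :=
  P₂.map fun ω => W (x.1, x.2, ω)

/-- `W̃(A;·) = ∫_A W̃(x,y;·) dx dy` for measurable `A ⊆ [0,1]²`. -/
def graphonInt (K : unitInterval × unitInterval → Measure ℝ)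
    (A : Set (unitInterval × unitInterval)) : Measure ℝ :=
  (((volume : Measure unitInterval).prod volume).restrict A).bind K

/-- The cut semidistance `d_□` between two probability graphons on `[0,1]`:
`sup_{S,T} d_LP(K(S×T;·), L(S×T;·))` over measurable `S, T ⊆ [0,1]`. -/
def cutDistKer (K L : unitInterval × unitInterval → Measure ℝ) : ℝ :=
  ⨆ p : {S : Set unitInterval // MeasurableSet S} ×
        {T : Set unitInterval // MeasurableSet T},
    levyProkhorovDist (graphonInt K (p.1.1 ×ˢ p.2.1)) (graphonInt L (p.1.1 ×ˢ p.2.1))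

/-- The unlabelled cut distance `δ_□`: infimum of `d_□(K, L∘(φ×φ))` over
Lebesgue-measure-preserving bijections `φ` of `[0,1]`. -/
def unlabCutDist (K L : unitInterval × unitInterval → Measure ℝ) : ℝ :=
  ⨅ φ : {φ : unitInterval ≃ᵐ unitInterval //
          MeasurePreserving φ (volume : Measure unitInterval) volume},
    cutDistKer K fun x => L (φ.1 x.1, φ.1 x.2)

/-- A P-variable on `[0,1] × [0,1] × Ω₂` (with Lebesgue measure on `[0,1]`),
bundled as a `PVar`. -/
def PVar.ofUnitInterval {Ω₂ : Type*} [MeasurableSpace Ω₂] (P₂ : Measure Ω₂)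
    [h₂ : IsProbabilityMeasure P₂] (W : unitInterval × unitInterval × Ω₂ → ℝ)
    (hW : Measurable W) : PVar :=
  ⟨unitInterval, Ω₂, (volume : Measure unitInterval), P₂, inferInstance, h₂, W, hW⟩

section Aux

/-- plain vector builder -/
def eVec {k : ℕ} (a b : Fin k → ℝ) (w : ℝ) : RE (2 * k + 1) :=
  (WithLp.equiv 2 (Fin (2 * k + 1) → ℝ)).symm fun i =>
    if _ : (i : ℕ) < 2 * k then
      if (i : ℕ) % 2 = 0 then a ⟨(i : ℕ) / 2, by omega⟩
      else b ⟨(i : ℕ) / 2, by omega⟩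
    else w

lemma sVec_eq_eVec {Ω₁ Ω₂ : Type*} (k : ℕ) (f : Fin k → Ω₁ → ℝ)
    (W : Ω₁ × Ω₁ × Ω₂ → ℝ) (z : Ω₁ × Ω₁ × Ω₂) :
    sVec k f W z = eVec (fun i => f i z.1) (fun i => f i z.2.1) (W z) := rfl

lemma eVec_apply {k : ℕ} (a b : Fin k → ℝ) (w : ℝ) (i : Fin (2 * k + 1)) :
    eVec a b w i =
      if h : (i : ℕ) < 2 * k then
        if (i : ℕ) % 2 = 0 then a ⟨(i : ℕ) / 2, by omega⟩
        else b ⟨(i : ℕ) / 2, by omega⟩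
      else w := rfl

lemma dist_eVec_le {k : ℕ} {a b a' b' : Fin k → ℝ} {w w' : ℝ} {m : ℝ}
    (ha : ∀ i, |a i - a' i| ≤ m) (hb : ∀ i, |b i - b' i| ≤ m)
    (hw : |w - w'| ≤ m) :
    dist (eVec a b w) (eVec a' b' w') ≤ Real.sqrt (2 * k + 1) * m := by
  have hm : 0 ≤ m := le_trans (abs_nonneg _) hw
  rw [EuclideanSpace.dist_eq]
  have hcoord : ∀ i : Fin (2 * k + 1),
      dist (eVec a b w i) (eVec a' b' w' i) ^ 2 ≤ m ^ 2 := by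
    intro i
    have : |eVec a b w i - eVec a' b' w' i| ≤ m := by
      rw [eVec_apply, eVec_apply]
      split_ifs with h1 h2
      · exact ha _
      · exact hb _
      · exact hw
    have h0 : dist (eVec a b w i) (eVec a' b' w' i) ≤ m := by
      rwa [Real.dist_eq]
    exact pow_le_pow_left₀ dist_nonneg h0 2
  calc Real.sqrt (∑ i, dist (eVec a b w i) (eVec a' b' w' i) ^ 2)
      ≤ Real.sqrt (∑ _i : Fin (2 * k + 1), m ^ 2) :=
        Real.sqrt_le_sqrt (Finset.sum_le_sum fun i _ => hcoord i)
    _ = Real.sqrt ((2 * k + 1) * m ^ 2) := by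
        rw [Finset.sum_const, Finset.card_univ, Fintype.card_fin, nsmul_eq_mul]
        norm_num
    _ ≤ Real.sqrt (2 * k + 1) * m := by
        rw [Real.sqrt_mul (by positivity), Real.sqrt_sq hm]

end Aux
section Aux2
open Metric

lemma measurable_sVec {Ω₁ Ω₂ : Type*} [MeasurableSpace Ω₁] [MeasurableSpace Ω₂]
    {k : ℕ} {f : Fin k → Ω₁ → ℝ} (hf : ∀ i, Measurable (f i))
    {W : Ω₁ × Ω₁ × Ω₂ → ℝ} (hW : Measurable W) :
    Measurable (sVec k f W) := by
  have : Measurable fun z : Ω₁ × Ω₁ × Ω₂ => (fun i : Fin (2 * k + 1) =>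
      if _ : (i : ℕ) < 2 * k then
        if (i : ℕ) % 2 = 0 then f ⟨(i : ℕ) / 2, by omega⟩ z.1
        else f ⟨(i : ℕ) / 2, by omega⟩ z.2.1
      else W z) := by
    apply measurable_pi_lambda
    intro i
    split_ifs with h1 h2
    · exact (hf _).comp measurable_fst
    · exact (hf _).comp (measurable_fst.comp measurable_snd)
    · exact hW
  exact (WithLp.measurable_toLp 2 _).comp this

/-- The bump function `h`. -/
def bump (r : ℝ) {X : Type*} [PseudoMetricSpace X] (B : Set X) (v : X) : ℝ :=
  max 0 (1 - infDist v B / r)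

lemma bump_nonneg {r : ℝ} {X : Type*} [PseudoMetricSpace X] {B : Set X} (v : X) :
    0 ≤ bump r B v := le_max_left _ _

lemma bump_le_one {r : ℝ} (hr : 0 < r) {X : Type*} [PseudoMetricSpace X] {B : Set X} (v : X) :
    bump r B v ≤ 1 := by
  apply max_le zero_le_one
  have := infDist_nonneg (s := B) (x := v)
  have : 0 ≤ infDist v B / r := by positivity
  linarith

lemma bump_eq_one {r : ℝ} {X : Type*} [PseudoMetricSpace X] {B : Set X} {v : X}
    (hv : v ∈ B) : bump r B v = 1 := by
  simp [bump, infDist_zero_of_mem hv]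

lemma bump_lip {r : ℝ} (hr : 0 < r) {X : Type*} [PseudoMetricSpace X] {B : Set X}
    (v u : X) : bump r B v ≤ bump r B u + dist v u / r := by
  have h1 : infDist v B ≥ infDist u B - dist v u := by
    have := infDist_le_infDist_add_dist (x := u) (y := v) (s := B)
    rw [dist_comm] at this; linarith
  have hd : 0 ≤ dist v u / r := by positivity
  apply max_le
  · linarith [bump_nonneg (r := r) (B := B) u]
  · have h2 : infDist u B / r ≤ (infDist v B + dist v u) / r := by
      gcongr
      linarith
    rw [add_div] at h2
    have : 1 - infDist v B / r ≤ (1 - infDist u B / r) + dist v u / r := by linarith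
    exact this.trans (by gcongr; exact le_max_right _ _)

lemma bump_eq_zero {r : ℝ} (hr : 0 < r) {X : Type*} [PseudoMetricSpace X] {B : Set X}
    (hB : B.Nonempty) {v : X} (hv : v ∉ thickening r B) : bump r B v = 0 := by
  have : ¬ infDist v B < r := fun h => hv ((mem_thickening_iff_infDist_lt hB).2 h)
  push_neg at this
  have : (1 : ℝ) ≤ infDist v B / r := (one_le_div hr).2 this
  simp only [bump, max_eq_left_iff]
  linarith

lemma bump_measurable {r : ℝ} {X : Type*} [PseudoMetricSpace X] [MeasurableSpace X]
    [OpensMeasurableSpace X] (B : Set X) : Measurable (bump r B) := by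
  apply Measurable.max measurable_const
  exact (measurable_const.sub (((continuous_infDist_pt B).measurable).div_const r))

end Aux2
section LemA
open Metric

lemma lemA {μ' ν' : Measure ℝ} (hν1 : ν' univ ≤ 1) {δ L : ℝ} (hδ : 0 < δ) (hL : 0 ≤ L)
    {g : ℝ → ℝ} (hgm : Measurable g) (hg0 : ∀ w, 0 ≤ g w) (hg1 : ∀ w, g w ≤ 1)
    (hgL : ∀ w w', g w ≤ g w' + L * dist w w')
    (hLP : levyProkhorovEDist μ' ν' < ENNReal.ofReal δ) :
    ∫⁻ w, ENNReal.ofReal (g w) ∂μ' ≤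
      ∫⁻ w, ENNReal.ofReal (g w) ∂ν' + ENNReal.ofReal (L * δ + δ) := by
  -- shifted function
  set g' : ℝ → ℝ := fun w => g w + L * δ with hg'
  have hg'0 : ∀ w, 0 ≤ g' w := fun w => by have := hg0 w; positivity
  have hg'm : Measurable g' := hgm.add_const _
  -- key measure bound
  have key : ∀ t : ℝ, μ' {a | t < g a} ≤ ν' {a | t < g' a} + ENNReal.ofReal δ := by
    intro t
    have hmeas : MeasurableSet {a : ℝ | t < g a} := measurableSet_lt measurable_const hgm
    have h1 := left_measure_le_of_levyProkhorovEDist_lt hLP hmeas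
    rw [ENNReal.toReal_ofReal hδ.le] at h1
    refine h1.trans (add_le_add_left (measure_mono ?_) _)
    intro x hx
    rw [mem_thickening_iff] at hx
    obtain ⟨z, hz, hdz⟩ := hx
    have := hgL z x
    have : t < g x + L * dist z x := lt_of_lt_of_le hz (by linarith)
    have hdx : L * dist z x ≤ L * δ := by
      rw [dist_comm]
      exact mul_le_mul_of_nonneg_left hdz.le hL
    show t < g' x
    simp only [hg']
    linarith
  -- layer cake for μ'
  have lay1 : ∫⁻ w, ENNReal.ofReal (g w) ∂μ' = ∫⁻ t in Ioi (0:ℝ), μ' {a | t < g a} :=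
    lintegral_eq_lintegral_meas_lt μ' (Filter.Eventually.of_forall hg0) hgm.aemeasurable
  have lay2 : ∫⁻ w, ENNReal.ofReal (g' w) ∂ν' = ∫⁻ t in Ioi (0:ℝ), ν' {a | t < g' a} :=
    lintegral_eq_lintegral_meas_lt ν' (Filter.Eventually.of_forall hg'0) hg'm.aemeasurable
  -- restrict μ'-side to Ioc 0 1
  have hsplit : ∫⁻ t in Ioi (0:ℝ), μ' {a | t < g a} = ∫⁻ t in Ioc (0:ℝ) 1, μ' {a | t < g a} := by
    rw [← Ioc_union_Ioi_eq_Ioi (zero_le_one (α := ℝ)),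
      lintegral_union measurableSet_Ioi Ioc_disjoint_Ioi_same]
    have : ∫⁻ t in Ioi (1:ℝ), μ' {a | t < g a} = 0 := by
      rw [setLIntegral_eq_zero_iff measurableSet_Ioi]
      · filter_upwards with t htmem
        simp only [mem_Ioi] at htmem
        have : {a | t < g a} = ∅ := by
          ext a; simp only [mem_setOf_eq, mem_empty_iff_false, iff_false, not_lt]
          exact (hg1 a).trans htmem.le
        simp [this]
      · exact Antitone.measurable fun s t hst => measure_mono fun a ha => lt_of_le_of_lt hst ha
    rw [this, add_zero]
  calc ∫⁻ w, ENNReal.ofReal (g w) ∂μ'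
      = ∫⁻ t in Ioc (0:ℝ) 1, μ' {a | t < g a} := by rw [lay1, hsplit]
    _ ≤ ∫⁻ t in Ioc (0:ℝ) 1, (ν' {a | t < g' a} + ENNReal.ofReal δ) :=
        lintegral_mono fun t => key t
    _ = (∫⁻ t in Ioc (0:ℝ) 1, ν' {a | t < g' a}) + ENNReal.ofReal δ * volume (Ioc (0:ℝ) 1) := by
        rw [lintegral_add_right _ measurable_const, lintegral_const,
          Measure.restrict_apply MeasurableSet.univ, univ_inter]
    _ ≤ (∫⁻ t in Ioi (0:ℝ), ν' {a | t < g' a}) + ENNReal.ofReal δ := by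
        gcongr
        · exact Ioc_subset_Ioi_self
        · simp [Real.volume_Ioc]
    _ = (∫⁻ w, ENNReal.ofReal (g' w) ∂ν') + ENNReal.ofReal δ := by rw [lay2]
    _ ≤ (∫⁻ w, ENNReal.ofReal (g w) ∂ν') + ENNReal.ofReal (L * δ) + ENNReal.ofReal δ := by
        gcongr
        have : ∀ w, ENNReal.ofReal (g' w) = ENNReal.ofReal (g w) + ENNReal.ofReal (L * δ) := by
          intro w; rw [← ENNReal.ofReal_add (hg0 w) (by positivity)]
        simp_rw [this]
        rw [lintegral_add_right _ measurable_const, lintegral_const]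
        gcongr
        calc ENNReal.ofReal (L * δ) * ν' univ ≤ ENNReal.ofReal (L * δ) * 1 := by gcongr
          _ = ENNReal.ofReal (L * δ) := mul_one _
    _ = (∫⁻ w, ENNReal.ofReal (g w) ∂ν') + ENNReal.ofReal (L * δ + δ) := by
        rw [add_assoc, ← ENNReal.ofReal_add (by positivity) hδ.le]

end LemA
section LemD

variable {Ω₂ : Type*} [MeasurableSpace Ω₂] (P₂ : Measure Ω₂) [IsProbabilityMeasure P₂]

lemma measurable_section {W : unitInterval × unitInterval × Ω₂ → ℝ}
    (hW : Measurable W) (x : unitInterval × unitInterval) :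
    Measurable fun ω => W (x.1, x.2, ω) := by fun_prop

lemma measurable_assocGraphon {W : unitInterval × unitInterval × Ω₂ → ℝ}
    (hW : Measurable W) : Measurable (assocGraphon P₂ W) := by
  rw [Measure.measurable_measure]
  intro s hs
  have hsec : ∀ x : unitInterval × unitInterval,
      (P₂.map fun ω => W (x.1, x.2, ω)) s = P₂ {ω | W (x.1, x.2, ω) ∈ s} := by
    intro x
    rw [Measure.map_apply (measurable_section hW x) hs]
    rfl
  simp only [assocGraphon]
  simp_rw [hsec]
  have hT : MeasurableSet {p : (unitInterval × unitInterval) × Ω₂ |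
      W (p.1.1, p.1.2, p.2) ∈ s} := (hW.comp (by fun_prop)) hs
  exact measurable_measure_prodMk_left hT

lemma assocGraphon_univ {W : unitInterval × unitInterval × Ω₂ → ℝ}
    (hW : Measurable W) (x : unitInterval × unitInterval) :
    assocGraphon P₂ W x univ = 1 := by
  simp only [assocGraphon]
  rw [Measure.map_apply (measurable_section hW x) MeasurableSet.univ]
  simp

lemma graphonInt_univ_le_one {W : unitInterval × unitInterval × Ω₂ → ℝ}
    (hW : Measurable W) (A : Set (unitInterval × unitInterval)) :
    graphonInt (assocGraphon P₂ W) A univ ≤ 1 := by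
  rw [graphonInt, Measure.bind_apply MeasurableSet.univ (measurable_assocGraphon P₂ hW).aemeasurable]
  calc ∫⁻ x, assocGraphon P₂ W x univ
        ∂(((volume : Measure unitInterval).prod volume).restrict A)
      = ∫⁻ _, 1 ∂(((volume : Measure unitInterval).prod volume).restrict A) := by
        apply lintegral_congr; intro x; exact assocGraphon_univ P₂ hW x
    _ = ((volume : Measure unitInterval).prod volume).restrict A univ := by
        rw [lintegral_one]
    _ ≤ ((volume : Measure unitInterval).prod volume) univ :=
        Measure.restrict_le_self _
    _ = 1 := measure_univ

lemma lemD {W : unitInterval × unitInterval × Ω₂ → ℝ} (hW : Measurable W)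
    {S T : Set unitInterval} (hS : MeasurableSet S) (hT : MeasurableSet T)
    {g : ℝ → ℝ≥0∞} (hg : Measurable g) :
    ∫⁻ z in S ×ˢ (T ×ˢ univ), g (W z)
        ∂((volume : Measure unitInterval).prod ((volume : Measure unitInterval).prod P₂)) =
      ∫⁻ w, g w ∂(graphonInt (assocGraphon P₂ W) (S ×ˢ T)) := by
  have hgW : Measurable fun z => g (W z) := hg.comp hW
  rw [graphonInt, Measure.lintegral_bind (measurable_assocGraphon P₂ hW).aemeasurable hg.aemeasurable]
  have hinner : ∀ p : unitInterval × unitInterval,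
      ∫⁻ w, g w ∂(assocGraphon P₂ W p) = ∫⁻ ω, g (W (p.1, p.2, ω)) ∂P₂ := by
    intro p
    rw [assocGraphon, lintegral_map hg (measurable_section hW p)]
  simp_rw [hinner]
  rw [← Measure.prod_restrict S T]
  rw [lintegral_prod _ (Measurable.aemeasurable
    (Measurable.lintegral_prod_right'
      (f := fun (q : (unitInterval × unitInterval) × Ω₂) => g (W (q.1.1, q.1.2, q.2)))
      (hg.comp (hW.comp (by fun_prop)))))]
  -- LHS
  have hre : ((volume : Measure unitInterval).prod
        ((volume : Measure unitInterval).prod P₂)).restrict (S ×ˢ (T ×ˢ univ)) =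
      ((volume : Measure unitInterval).restrict S).prod
        (((volume : Measure unitInterval).restrict T).prod P₂) := by
    rw [← Measure.prod_restrict, ← Measure.prod_restrict, Measure.restrict_univ]
  rw [hre, lintegral_prod _ hgW.aemeasurable]
  apply lintegral_congr
  intro x
  rw [lintegral_prod (fun y : unitInterval × Ω₂ => g (W (x, y)))
    (Measurable.aemeasurable (by fun_prop))]

end LemD
section Grid

/-- index of the grid cell containing `t` -/
def cidx (M : ℕ) (t : ℝ) : ℕ := min (M - 1) ⌊(t + 1) * M / 2⌋₊

/-- center of the `m`-th grid cell -/
def cen (M : ℕ) (m : ℕ) : ℝ := -1 + (2 * m + 1) / M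

lemma cidx_lt {M : ℕ} (hM : 0 < M) (t : ℝ) : cidx M t < M :=
  lt_of_le_of_lt (min_le_left _ _) (by omega)

lemma measurable_cidx (M : ℕ) : Measurable (cidx M) := by
  have h1 : Measurable fun t : ℝ => ⌊(t + 1) * M / 2⌋₊ :=
    Nat.measurable_floor.comp (by fun_prop)
  exact (measurable_from_top (f := fun n : ℕ => min (M - 1) n)).comp h1

lemma snap_close {M : ℕ} (hM : 0 < M) {t : ℝ} (ht : t ∈ Icc (-1 : ℝ) 1) :
    |t - cen M (cidx M t)| ≤ 1 / M := by
  obtain ⟨ht1, ht2⟩ := ht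
  have hMR : (0 : ℝ) < M := by exact_mod_cast hM
  set s : ℝ := (t + 1) * M / 2 with hs
  have hs0 : 0 ≤ s := by
    apply div_nonneg _ (by norm_num)
    apply mul_nonneg (by linarith) hMR.le
  have hsM : s ≤ M := by
    rw [hs, div_le_iff₀ (by norm_num)]
    nlinarith
  set i : ℕ := cidx M t with hi
  have hi_eq : i = min (M - 1) ⌊s⌋₊ := rfl
  have h1 : (i : ℝ) ≤ s := by
    have : i ≤ ⌊s⌋₊ := by rw [hi_eq]; exact min_le_right _ _
    calc (i : ℝ) ≤ (⌊s⌋₊ : ℝ) := by exact_mod_cast this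
      _ ≤ s := Nat.floor_le hs0
  have h2 : s ≤ (i : ℝ) + 1 := by
    by_cases hcase : ⌊s⌋₊ ≤ M - 1
    · have : i = ⌊s⌋₊ := by rw [hi_eq]; omega
      rw [this]
      exact (Nat.lt_floor_add_one s).le
    · have : i = M - 1 := by rw [hi_eq]; omega
      rw [this]
      have : ((M - 1 : ℕ) : ℝ) + 1 = M := by
        have : (1:ℕ) ≤ M := hM
        push_cast [Nat.cast_sub this]
        ring
      rw [this]
      exact hsM
  -- t = 2 s / M - 1
  have ht_eq : t = 2 * s / M - 1 := by
    rw [hs]; field_simp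
    ring
  have hcen : cen M i = -1 + (2 * i + 1) / M := rfl
  have key : |2 * s - (2 * i + 1)| ≤ 1 := by
    rw [abs_le]; constructor <;> linarith
  have : t - cen M i = (2 * s - (2 * i + 1)) / M := by
    rw [ht_eq, hcen]; field_simp; ring
  rw [this, abs_div, abs_of_pos hMR]
  gcongr
end Grid
section Main
open Metric

lemma measurable_eVec_w {k : ℕ} (a b : Fin k → ℝ) : Measurable fun w : ℝ => eVec a b w := by
  have : Measurable fun w : ℝ => (fun i : Fin (2 * k + 1) =>
      if _ : (i : ℕ) < 2 * k then
        if (i : ℕ) % 2 = 0 then a ⟨(i : ℕ) / 2, by omega⟩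
        else b ⟨(i : ℕ) / 2, by omega⟩
      else w) := by
    apply measurable_pi_lambda
    intro i
    split_ifs
    · exact measurable_const
    · exact measurable_const
    · exact measurable_id
  exact (WithLp.measurable_toLp 2 _).comp this

variable {Ω₂ : Type*} [MeasurableSpace Ω₂] (P₂ : Measure Ω₂) [IsProbabilityMeasure P₂]

lemma oneSided {k M : ℕ} (hM : 0 < M) {r δ : ℝ} (hr : 0 < r) (hδ : 0 < δ)
    {U V : unitInterval × unitInterval × Ω₂ → ℝ} (hU : Measurable U) (hV : Measurable V)
    (hyp : ∀ S T : Set unitInterval, MeasurableSet S → MeasurableSet T →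
      levyProkhorovEDist (graphonInt (assocGraphon P₂ U) (S ×ˢ T))
        (graphonInt (assocGraphon P₂ V) (S ×ˢ T)) < ENNReal.ofReal δ)
    {f : Fin k → unitInterval → ℝ} (hf : ∀ i, Measurable (f i))
    (hIcc : ∀ i x, f i x ∈ Icc (-1 : ℝ) 1)
    {B : Set (RE (2 * k + 1))} (hB : MeasurableSet B) :
    Smeasure (volume : Measure unitInterval) P₂ f U B ≤
      Smeasure (volume : Measure unitInterval) P₂ f V (thickening r B) +
      ENNReal.ofReal (2 * (Real.sqrt (2 * k + 1) * (1 / M) / r) +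
        (Fintype.card ((Fin k → Fin M) × (Fin k → Fin M))) *
          (Real.sqrt (2 * k + 1) / r * δ + δ)) := by
  classical
  rcases Set.eq_empty_or_nonempty B with hBe | hBne
  · subst hBe
    simp only [measure_empty]
    exact zero_le
  set Ck : ℝ := Real.sqrt (2 * k + 1) with hCk
  have hCk0 : 0 ≤ Ck := Real.sqrt_nonneg _
  set estep : ℝ := Ck * (1 / M) / r with hestep
  have hestep0 : 0 ≤ estep := by
    apply div_nonneg _ hr.le
    positivity
  set cErr : ℝ := Ck / r * δ + δ with hcErr
  have hcErr0 : 0 ≤ cErr := by positivity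
  set N : ℕ := Fintype.card ((Fin k → Fin M) × (Fin k → Fin M)) with hN
  set vol₃ : Measure (unitInterval × unitInterval × Ω₂) :=
    (volume : Measure unitInterval).prod ((volume : Measure unitInterval).prod P₂) with hvol₃
  have hvol₃_univ : vol₃ univ = 1 := measure_univ
  set h : RE (2 * k + 1) → ℝ := bump r B with hh
  have hhm : Measurable h := bump_measurable B
  -- snapped functions
  set f' : Fin k → unitInterval → ℝ := fun i x => cen M (cidx M (f i x)) with hf'def
  have hf' : ∀ i, Measurable (f' i) :=
    fun i => (measurable_from_top (f := cen M)).comp ((measurable_cidx M).comp (hf i))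
  have hsnap : ∀ i x, |f i x - f' i x| ≤ 1 / M := fun i x => snap_close hM (hIcc i x)
  -- cell map
  set cF : unitInterval → (Fin k → Fin M) := fun x i => ⟨cidx M (f i x), cidx_lt hM _⟩ with hcF
  set cell : (Fin k → Fin M) → Set unitInterval := fun j => {x | cF x = j} with hcell
  have hcell_meas : ∀ j, MeasurableSet (cell j) := by
    intro j
    have : cell j = ⋂ i : Fin k, {x | cidx M (f i x) = (j i : ℕ)} := by
      ext x
      simp only [hcell, mem_setOf_eq, mem_iInter, funext_iff, Fin.ext_iff]
      exact Iff.rfl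
    rw [this]
    exact MeasurableSet.iInter fun i =>
      ((measurable_cidx M).comp (hf i)) (measurableSet_singleton _)
  -- snapped test fns
  set g : (Fin k → Fin M) → (Fin k → Fin M) → ℝ → ℝ := fun j j' w =>
    h (eVec (fun i => cen M (j i)) (fun i => cen M (j' i)) w) with hgdef
  have hgm : ∀ j j', Measurable (g j j') := fun j j' => hhm.comp (measurable_eVec_w _ _)
  have hg0 : ∀ j j' w, 0 ≤ g j j' w := fun _ _ _ => bump_nonneg _
  have hg1 : ∀ j j' w, g j j' w ≤ 1 := fun _ _ _ => bump_le_one hr _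
  have hgL : ∀ j j' w w', g j j' w ≤ g j j' w' + (Ck / r) * dist w w' := by
    intro j j' w w'
    have hd : dist (eVec (fun i => cen M (j i)) (fun i => cen M (j' i)) w)
        (eVec (fun i => cen M (j i)) (fun i => cen M (j' i)) w') ≤ Ck * dist w w' := by
      exact dist_eVec_le (fun i => by simp [dist_nonneg]) (fun i => by simp [dist_nonneg])
        (le_of_eq (Real.dist_eq w w'))
    have := bump_lip hr (B := B)
      (eVec (fun i => cen M (j i)) (fun i => cen M (j' i)) w)
      (eVec (fun i => cen M (j i)) (fun i => cen M (j' i)) w')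
    have hdd : dist (eVec (fun i => cen M (j i)) (fun i => cen M (j' i)) w)
        (eVec (fun i => cen M (j i)) (fun i => cen M (j' i)) w') / r ≤ Ck / r * dist w w' := by
      rw [div_mul_eq_mul_div]
      exact (div_le_div_iff_of_pos_right hr).2 hd
    exact this.trans (by linarith)
  -- measurability of the random vectors
  have hsU : Measurable (sVec k f U) := measurable_sVec hf hU
  have hsV : Measurable (sVec k f V) := measurable_sVec hf hV
  have hsU' : Measurable (sVec k f' U) := measurable_sVec hf' hU
  have hsV' : Measurable (sVec k f' V) := measurable_sVec hf' hV
  -- pointwise snapping bound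
  have hpt : ∀ (Wf : unitInterval × unitInterval × Ω₂ → ℝ)
      (z : unitInterval × unitInterval × Ω₂),
      h (sVec k f Wf z) ≤ h (sVec k f' Wf z) + estep ∧
      h (sVec k f' Wf z) ≤ h (sVec k f Wf z) + estep := by
    intro Wf z
    have hd : dist (sVec k f Wf z) (sVec k f' Wf z) ≤ Ck * (1 / M) := by
      rw [sVec_eq_eVec, sVec_eq_eVec]
      apply dist_eVec_le (fun i => hsnap i z.1) (fun i => hsnap i z.2.1)
      simp only [sub_self, abs_zero]
      positivity
    have hdr : dist (sVec k f Wf z) (sVec k f' Wf z) / r ≤ estep := by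
      rw [hestep]
      exact (div_le_div_iff_of_pos_right hr).2 hd
    have hdr' : dist (sVec k f' Wf z) (sVec k f Wf z) / r ≤ estep := by
      rw [dist_comm]; exact hdr
    constructor
    · exact (bump_lip hr _ _).trans (by linarith)
    · exact (bump_lip hr _ _).trans (by linarith)
  -- integral version of the snapping bound
  have intstep : ∀ F G : unitInterval × unitInterval × Ω₂ → ℝ,
      (∀ z, F z ≤ G z + estep) →
      ∫⁻ z, ENNReal.ofReal (F z) ∂vol₃ ≤
        (∫⁻ z, ENNReal.ofReal (G z) ∂vol₃) + ENNReal.ofReal estep := by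
    intro F G hFG
    calc ∫⁻ z, ENNReal.ofReal (F z) ∂vol₃
        ≤ ∫⁻ z, (ENNReal.ofReal (G z) + ENNReal.ofReal estep) ∂vol₃ :=
          lintegral_mono fun z =>
            le_trans (ENNReal.ofReal_le_ofReal (hFG z)) ENNReal.ofReal_add_le
      _ = (∫⁻ z, ENNReal.ofReal (G z) ∂vol₃) + ENNReal.ofReal estep := by
          rw [lintegral_add_right _ measurable_const, lintegral_const, hvol₃_univ, mul_one]
  -- decomposition into cells
  have decomp : ∀ (Wf : unitInterval × unitInterval × Ω₂ → ℝ), Measurable Wf →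
      ∫⁻ z, ENNReal.ofReal (h (sVec k f' Wf z)) ∂vol₃ =
      ∑ q : (Fin k → Fin M) × (Fin k → Fin M),
        ∫⁻ w, ENNReal.ofReal (g q.1 q.2 w)
          ∂(graphonInt (assocGraphon P₂ Wf) (cell q.1 ×ˢ cell q.2)) := by
    intro Wf hWf
    have hptq : ∀ z : unitInterval × unitInterval × Ω₂,
        ENNReal.ofReal (h (sVec k f' Wf z)) =
        ∑ q : (Fin k → Fin M) × (Fin k → Fin M),
          (cell q.1 ×ˢ (cell q.2 ×ˢ univ)).indicator
            (fun z' => ENNReal.ofReal (g q.1 q.2 (Wf z'))) z := by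
      intro z
      rw [Finset.sum_eq_single (cF z.1, cF z.2.1)]
      · have hz : z ∈ cell (cF z.1) ×ˢ (cell (cF z.2.1) ×ˢ univ) :=
          ⟨rfl, rfl, trivial⟩
        rw [indicator_of_mem hz]
        rfl
      · intro q _ hq
        apply indicator_of_notMem
        intro hzq
        apply hq
        obtain ⟨h1, h2, -⟩ := hzq
        exact Prod.ext h1.symm h2.symm
      · intro hmem
        exact absurd (Finset.mem_univ _) hmem
    simp_rw [hptq]
    rw [lintegral_finset_sum]
    · apply Finset.sum_congr rfl
      intro q _
      rw [lintegral_indicator ((hcell_meas q.1).prod ((hcell_meas q.2).prod MeasurableSet.univ))]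
      exact lemD P₂ hWf (hcell_meas q.1) (hcell_meas q.2)
        (ENNReal.measurable_ofReal.comp (hgm q.1 q.2))
    · intro q _
      exact (Measurable.indicator
        ((ENNReal.measurable_ofReal.comp (hgm q.1 q.2)).comp hWf)
        ((hcell_meas q.1).prod ((hcell_meas q.2).prod MeasurableSet.univ)))
  -- per-cell comparison
  have percell : ∀ q : (Fin k → Fin M) × (Fin k → Fin M),
      ∫⁻ w, ENNReal.ofReal (g q.1 q.2 w)
          ∂(graphonInt (assocGraphon P₂ U) (cell q.1 ×ˢ cell q.2)) ≤
      (∫⁻ w, ENNReal.ofReal (g q.1 q.2 w)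
          ∂(graphonInt (assocGraphon P₂ V) (cell q.1 ×ˢ cell q.2))) +
        ENNReal.ofReal cErr := by
    intro q
    have := lemA (μ' := graphonInt (assocGraphon P₂ U) (cell q.1 ×ˢ cell q.2))
      (ν' := graphonInt (assocGraphon P₂ V) (cell q.1 ×ˢ cell q.2))
      (graphonInt_univ_le_one P₂ hV _) hδ (by positivity : (0:ℝ) ≤ Ck / r)
      (hgm q.1 q.2) (hg0 q.1 q.2) (hg1 q.1 q.2) (hgL q.1 q.2)
      (hyp _ _ (hcell_meas q.1) (hcell_meas q.2))
    rw [hcErr]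
    exact this
  -- outer bump bounds
  have houter1 : Smeasure (volume : Measure unitInterval) P₂ f U B ≤
      ∫⁻ z, ENNReal.ofReal (h (sVec k f U z)) ∂vol₃ := by
    have : Smeasure (volume : Measure unitInterval) P₂ f U B = vol₃ (sVec k f U ⁻¹' B) :=
      Measure.map_apply hsU hB
    rw [this, ← lintegral_indicator_one (hsU hB)]
    apply lintegral_mono
    intro z
    by_cases hz : z ∈ sVec k f U ⁻¹' B
    · rw [indicator_of_mem hz]
      have : h (sVec k f U z) = 1 := bump_eq_one hz
      simp [this]
    · rw [indicator_of_notMem hz]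
      exact zero_le
  have houter2 : ∫⁻ z, ENNReal.ofReal (h (sVec k f V z)) ∂vol₃ ≤
      Smeasure (volume : Measure unitInterval) P₂ f V (thickening r B) := by
    have hthick : MeasurableSet (thickening r B) := isOpen_thickening.measurableSet
    have : Smeasure (volume : Measure unitInterval) P₂ f V (thickening r B) =
        vol₃ (sVec k f V ⁻¹' thickening r B) := Measure.map_apply hsV hthick
    rw [this, ← lintegral_indicator_one (hsV hthick)]
    apply lintegral_mono
    intro z
    by_cases hz : z ∈ sVec k f V ⁻¹' thickening r B
    · rw [indicator_of_mem hz]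
      exact ENNReal.ofReal_le_one.2 (bump_le_one hr _)
    · rw [indicator_of_notMem hz]
      show ENNReal.ofReal (h (sVec k f V z)) ≤ 0
      rw [hh, bump_eq_zero hr hBne hz]
      simp
  -- main chain
  have chain : Smeasure (volume : Measure unitInterval) P₂ f U B ≤
      Smeasure (volume : Measure unitInterval) P₂ f V (thickening r B) +
      (ENNReal.ofReal estep + ((N : ℝ≥0∞) * ENNReal.ofReal cErr + ENNReal.ofReal estep)) := by
    calc Smeasure (volume : Measure unitInterval) P₂ f U B
        ≤ ∫⁻ z, ENNReal.ofReal (h (sVec k f U z)) ∂vol₃ := houter1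
      _ ≤ (∫⁻ z, ENNReal.ofReal (h (sVec k f' U z)) ∂vol₃) + ENNReal.ofReal estep :=
          intstep _ _ (fun z => (hpt U z).1)
      _ ≤ ((∑ q : (Fin k → Fin M) × (Fin k → Fin M),
            ∫⁻ w, ENNReal.ofReal (g q.1 q.2 w)
              ∂(graphonInt (assocGraphon P₂ V) (cell q.1 ×ˢ cell q.2))) +
            (N : ℝ≥0∞) * ENNReal.ofReal cErr) + ENNReal.ofReal estep := by
          gcongr
          rw [decomp U hU]
          calc ∑ q : (Fin k → Fin M) × (Fin k → Fin M),
              ∫⁻ w, ENNReal.ofReal (g q.1 q.2 w)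
                ∂(graphonInt (assocGraphon P₂ U) (cell q.1 ×ˢ cell q.2))
              ≤ ∑ q : (Fin k → Fin M) × (Fin k → Fin M),
                ((∫⁻ w, ENNReal.ofReal (g q.1 q.2 w)
                  ∂(graphonInt (assocGraphon P₂ V) (cell q.1 ×ˢ cell q.2))) +
                  ENNReal.ofReal cErr) := Finset.sum_le_sum fun q _ => percell q
            _ = (∑ q : (Fin k → Fin M) × (Fin k → Fin M),
                ∫⁻ w, ENNReal.ofReal (g q.1 q.2 w)
                  ∂(graphonInt (assocGraphon P₂ V) (cell q.1 ×ˢ cell q.2))) +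
                (N : ℝ≥0∞) * ENNReal.ofReal cErr := by
                rw [Finset.sum_add_distrib, Finset.sum_const, Finset.card_univ, hN,
                  nsmul_eq_mul]
      _ = ((∫⁻ z, ENNReal.ofReal (h (sVec k f' V z)) ∂vol₃) +
            (N : ℝ≥0∞) * ENNReal.ofReal cErr) + ENNReal.ofReal estep := by
          rw [decomp V hV]
      _ ≤ (((∫⁻ z, ENNReal.ofReal (h (sVec k f V z)) ∂vol₃) + ENNReal.ofReal estep) +
            (N : ℝ≥0∞) * ENNReal.ofReal cErr) + ENNReal.ofReal estep := by
          gcongr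
          exact intstep _ _ (fun z => (hpt V z).2)
      _ ≤ ((Smeasure (volume : Measure unitInterval) P₂ f V (thickening r B) +
            ENNReal.ofReal estep) + (N : ℝ≥0∞) * ENNReal.ofReal cErr) +
            ENNReal.ofReal estep := by gcongr
      _ = Smeasure (volume : Measure unitInterval) P₂ f V (thickening r B) +
          (ENNReal.ofReal estep + ((N : ℝ≥0∞) * ENNReal.ofReal cErr +
            ENNReal.ofReal estep)) := by ring
  refine chain.trans ?_
  gcongr
  have hNcast : (N : ℝ≥0∞) * ENNReal.ofReal cErr = ENNReal.ofReal ((N : ℝ) * cErr) := by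
    rw [ENNReal.ofReal_mul (by positivity : (0:ℝ) ≤ (N:ℝ)), ENNReal.ofReal_natCast]
  rw [hNcast, ← ENNReal.ofReal_add (by positivity) hestep0,
    ← ENNReal.ofReal_add hestep0 (by positivity)]
  apply ENNReal.ofReal_le_ofReal
  apply le_of_eq
  ring

end Main
section Wrap
open Metric

variable {Ω₂ : Type*} [MeasurableSpace Ω₂] (P₂ : Measure Ω₂) [IsProbabilityMeasure P₂]

/-- existence of a modulus δ for each profile index `k` and tolerance `ε'` -/
lemma exists_delta (k : ℕ) {ε' : ℝ} (hε' : 0 < ε') :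
    ∃ δ : ℝ, 0 < δ ∧ ∀ (U V : unitInterval × unitInterval × Ω₂ → ℝ),
      Measurable U → Measurable V →
      (∀ S T : Set unitInterval, MeasurableSet S → MeasurableSet T →
        levyProkhorovEDist (graphonInt (assocGraphon P₂ U) (S ×ˢ T))
          (graphonInt (assocGraphon P₂ V) (S ×ˢ T)) < ENNReal.ofReal δ) →
      ∀ f : Fin k → unitInterval → ℝ, (∀ i, Measurable (f i)) →
        (∀ i x, f i x ∈ Icc (-1 : ℝ) 1) →
        levyProkhorovEDist (Smeasure (volume : Measure unitInterval) P₂ f U)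
          (Smeasure (volume : Measure unitInterval) P₂ f V) ≤ ENNReal.ofReal ε' := by
  set r : ℝ := ε' / 2 with hrdef
  have hr : 0 < r := by positivity
  set Ck : ℝ := Real.sqrt (2 * k + 1) with hCk
  have hCk0 : 0 ≤ Ck := Real.sqrt_nonneg _
  -- choose M
  obtain ⟨M, hMgt⟩ := exists_nat_gt (max 1 (4 * Ck / (r * (ε' / 2))))
  have hM0 : 0 < M := by
    have h1 : (1:ℝ) < M := lt_of_le_of_lt (le_max_left _ _) hMgt
    have : (1:ℕ) < M := by exact_mod_cast h1
    omega
  have hMR : (0:ℝ) < M := by exact_mod_cast hM0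
  have hMbig : 4 * Ck / (r * (ε' / 2)) < M := lt_of_le_of_lt (le_max_right _ _) hMgt
  have hstep : 2 * (Ck * (1 / M) / r) ≤ ε' / 2 := by
    have h4 : 4 * Ck < M * (r * (ε' / 2)) := (div_lt_iff₀ (by positivity)).1 hMbig
    have e1 : 2 * (Ck * (1 / M) / r) = (2 * Ck) / (M * r) := by
      field_simp
    rw [e1, div_le_iff₀ (by positivity)]
    have h5 : (M:ℝ) * (r * (ε' / 2)) = ε' / 2 * ((M:ℝ) * r) := by ring
    linarith
  set N : ℕ := Fintype.card ((Fin k → Fin M) × (Fin k → Fin M)) with hN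
  have hN0 : (0:ℝ) < (N:ℝ) + 1 := by positivity
  set c : ℝ := ((N:ℝ) + 1) * (Ck / r + 1) with hc
  have hc0 : 0 < c := by positivity
  set δ : ℝ := (ε' / 2) / c with hδdef
  have hδ : 0 < δ := by positivity
  have hδsum : (N:ℝ) * (Ck / r * δ + δ) ≤ ε' / 2 := by
    have h1 : (N:ℝ) * (Ck / r * δ + δ) = (N:ℝ) * (Ck / r + 1) * δ := by ring
    have h2 : (N:ℝ) * (Ck / r + 1) * δ ≤ c * δ := by
      apply mul_le_mul_of_nonneg_right _ hδ.le
      rw [hc]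
      apply mul_le_mul_of_nonneg_right _ (by positivity)
      linarith
    have h3 : c * δ = ε' / 2 := by
      rw [hδdef, mul_div_cancel₀ _ hc0.ne']
    linarith
  refine ⟨δ, hδ, ?_⟩
  intro U V hU hV hyp f hf hIcc
  -- total error bound
  have htot : 2 * (Ck * (1 / M) / r) + (N:ℝ) * (Ck / r * δ + δ) ≤ ε' := by linarith
  have key : ∀ (U' V' : unitInterval × unitInterval × Ω₂ → ℝ),
      Measurable U' → Measurable V' →
      (∀ S T : Set unitInterval, MeasurableSet S → MeasurableSet T →
        levyProkhorovEDist (graphonInt (assocGraphon P₂ U') (S ×ˢ T))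
          (graphonInt (assocGraphon P₂ V') (S ×ˢ T)) < ENNReal.ofReal δ) →
      ∀ B : Set (RE (2 * k + 1)), MeasurableSet B →
        Smeasure (volume : Measure unitInterval) P₂ f U' B ≤
          Smeasure (volume : Measure unitInterval) P₂ f V' (thickening r B) +
          ENNReal.ofReal ε' := by
    intro U' V' hU' hV' hyp' B hB
    refine (oneSided P₂ hM0 hr hδ hU' hV' hyp' hf hIcc hB).trans ?_
    exact add_le_add_right (ENNReal.ofReal_le_ofReal htot) _
  apply levyProkhorovEDist_le_of_forall
  intro ε'' B hlt htop hB
  have hε''r : ε' ≤ ε''.toReal := by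
    have := ENNReal.toReal_mono htop.ne hlt.le
    rwa [ENNReal.toReal_ofReal hε'.le] at this
  have hof : ENNReal.ofReal ε' ≤ ε'' := hlt.le
  have hthick : ∀ C : Set (RE (2 * k + 1)), thickening r C ⊆ thickening ε''.toReal C :=
    fun C => thickening_mono (by linarith [hrdef ▸ hr]) C
  constructor
  · exact (key U V hU hV hyp B hB).trans
      (add_le_add (measure_mono (hthick B)) hof)
  · exact (key V U hV hU (fun S T hS hT => by
      rw [levyProkhorovEDist_comm]; exact hyp S T hS hT) B hB).trans
      (add_le_add (measure_mono (hthick B)) hof)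

end Wrap
section Haus

variable {Ω₂ : Type*} [MeasurableSpace Ω₂] (P₂ : Measure Ω₂) [IsProbabilityMeasure P₂]

lemma smeasure_univ {k : ℕ} {f : Fin k → unitInterval → ℝ} (hf : ∀ i, Measurable (f i))
    {W : unitInterval × unitInterval × Ω₂ → ℝ} (hW : Measurable W) :
    Smeasure (volume : Measure unitInterval) P₂ f W univ = 1 := by
  rw [Smeasure, Measure.map_apply (measurable_sVec hf hW) MeasurableSet.univ]
  simp

lemma skset_nonempty (k : ℕ) (W : unitInterval × unitInterval × Ω₂ → ℝ) :
    (SkSet (volume : Measure unitInterval) P₂ k W).Nonempty :=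
  ⟨_, ⟨fun _ _ => 0, fun _ => measurable_const, fun _ _ => ⟨by norm_num, by norm_num⟩, rfl⟩⟩

lemma dHLP_nonneg {X : Type*} [MeasurableSpace X] [PseudoEMetricSpace X]
    (A B : Set (Measure X)) : 0 ≤ dHLP A B := ENNReal.toReal_nonneg

lemma dHLP_le_of_match {k : ℕ} {W W' : unitInterval × unitInterval × Ω₂ → ℝ}
    {ε' : ℝ} (hε' : 0 ≤ ε')
    (hmatch : ∀ f : Fin k → unitInterval → ℝ, (∀ i, Measurable (f i)) →
      (∀ i x, f i x ∈ Icc (-1 : ℝ) 1) →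
      levyProkhorovEDist (Smeasure (volume : Measure unitInterval) P₂ f W)
        (Smeasure (volume : Measure unitInterval) P₂ f W') ≤ ENNReal.ofReal ε') :
    dHLP (SkSet (volume : Measure unitInterval) P₂ k W)
      (SkSet (volume : Measure unitInterval) P₂ k W') ≤ ε' := by
  have hE : eHausLP (SkSet (volume : Measure unitInterval) P₂ k W)
      (SkSet (volume : Measure unitInterval) P₂ k W') ≤ ENNReal.ofReal ε' := by
    apply max_le
    · apply iSup₂_le
      rintro μ ⟨f, hf, hIcc, rfl⟩
      refine iInf₂_le_of_le (Smeasure (volume : Measure unitInterval) P₂ f W')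
        ⟨f, hf, hIcc, rfl⟩ ?_
      exact hmatch f hf hIcc
    · apply iSup₂_le
      rintro ν ⟨f, hf, hIcc, rfl⟩
      refine iInf₂_le_of_le (Smeasure (volume : Measure unitInterval) P₂ f W)
        ⟨f, hf, hIcc, rfl⟩ ?_
      exact hmatch f hf hIcc
  calc dHLP _ _ ≤ (ENNReal.ofReal ε').toReal := ENNReal.toReal_mono ENNReal.ofReal_ne_top hE
    _ = ε' := ENNReal.toReal_ofReal hε'

lemma dHLP_le_one {k : ℕ} {W W' : unitInterval × unitInterval × Ω₂ → ℝ}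
    (hW : Measurable W) (hW' : Measurable W') :
    dHLP (SkSet (volume : Measure unitInterval) P₂ k W)
      (SkSet (volume : Measure unitInterval) P₂ k W') ≤ 1 := by
  have key : ∀ (μ ν : Measure (RE (2 * k + 1))),
      μ ∈ SkSet (volume : Measure unitInterval) P₂ k W →
      ν ∈ SkSet (volume : Measure unitInterval) P₂ k W' →
      levyProkhorovEDist μ ν ≤ 1 := by
    rintro μ ν ⟨f, hf, hIcc, rfl⟩ ⟨f', hf', hIcc', rfl⟩
    refine (levyProkhorovEDist_le_max_measure_univ _ _).trans ?_
    rw [smeasure_univ P₂ hf hW, smeasure_univ P₂ hf' hW']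
    simp
  have hE : eHausLP (SkSet (volume : Measure unitInterval) P₂ k W)
      (SkSet (volume : Measure unitInterval) P₂ k W') ≤ 1 := by
    apply max_le
    · apply iSup₂_le
      intro μ hμ
      obtain ⟨ν, hν⟩ := skset_nonempty P₂ k W'
      exact iInf₂_le_of_le ν hν (key μ ν hμ hν)
    · apply iSup₂_le
      intro ν hν
      obtain ⟨μ, hμ⟩ := skset_nonempty P₂ k W
      exact iInf₂_le_of_le μ hμ (key μ ν hμ hν)
  calc dHLP _ _ ≤ (1 : ℝ≥0∞).toReal := ENNReal.toReal_mono (by simp) hE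
    _ = 1 := by simp

/-- profile invariance under a measure-preserving bijection -/
lemma skset_comp (k : ℕ) {W : unitInterval × unitInterval × Ω₂ → ℝ} (hW : Measurable W)
    (φ : unitInterval ≃ᵐ unitInterval)
    (hφ : MeasurePreserving φ (volume : Measure unitInterval) volume) :
    SkSet (volume : Measure unitInterval) P₂ k
        (fun z => W (φ z.1, φ z.2.1, z.2.2)) =
      SkSet (volume : Measure unitInterval) P₂ k W := by
  have hΦm : Measurable (fun z : unitInterval × unitInterval × Ω₂ =>
      ((φ z.1, φ z.2.1, z.2.2) : unitInterval × unitInterval × Ω₂)) := by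
    apply Measurable.prodMk (φ.measurable.comp measurable_fst)
    exact Measurable.prodMk (φ.measurable.comp (measurable_fst.comp measurable_snd))
      (measurable_snd.comp measurable_snd)
  have hΦp : MeasurePreserving (fun z : unitInterval × unitInterval × Ω₂ =>
      ((φ z.1, φ z.2.1, z.2.2) : unitInterval × unitInterval × Ω₂))
      ((volume : Measure unitInterval).prod ((volume : Measure unitInterval).prod P₂))
      ((volume : Measure unitInterval).prod ((volume : Measure unitInterval).prod P₂)) :=
    hφ.prod (hφ.prod (MeasurePreserving.id P₂))
  have keymap : ∀ f : Fin k → unitInterval → ℝ, (∀ i, Measurable (f i)) →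
      Smeasure (volume : Measure unitInterval) P₂ f
          (fun z => W (φ z.1, φ z.2.1, z.2.2)) =
      Smeasure (volume : Measure unitInterval) P₂ (fun i x => f i (φ.symm x)) W := by
    intro f hf
    have hG : Measurable (sVec k (fun i x => f i (φ.symm x)) W) :=
      measurable_sVec (f := fun i x => f i (φ.symm x))
        (fun i => (hf i).comp φ.symm.measurable) hW
    have hcomp : sVec k f (fun z => W (φ z.1, φ z.2.1, z.2.2)) =
        (sVec k (fun i x => f i (φ.symm x)) W) ∘
          (fun z : unitInterval × unitInterval × Ω₂ => (φ z.1, φ z.2.1, z.2.2)) := by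
      funext z
      rw [Function.comp_apply, sVec_eq_eVec, sVec_eq_eVec]
      have hz1 : φ.symm ((φ z.1, φ z.2.1, z.2.2) :
          unitInterval × unitInterval × Ω₂).1 = z.1 := φ.symm_apply_apply z.1
      have hz2 : φ.symm ((φ z.1, φ z.2.1, z.2.2) :
          unitInterval × unitInterval × Ω₂).2.1 = z.2.1 := φ.symm_apply_apply z.2.1
      rw [hz1, hz2]
    rw [Smeasure, Smeasure, hcomp, ← Measure.map_map hG hΦm, hΦp.map_eq]
  ext μ
  constructor
  · rintro ⟨f, hf, hIcc, rfl⟩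
    exact ⟨fun i x => f i (φ.symm x), fun i => (hf i).comp φ.symm.measurable,
      fun i x => hIcc i _, (keymap f hf)⟩
  · rintro ⟨f, hf, hIcc, rfl⟩
    refine ⟨fun i x => f i (φ x), fun i => (hf i).comp φ.measurable,
      fun i x => hIcc i _, ?_⟩
    rw [keymap (fun i x => f i (φ x)) (fun i => (hf i).comp φ.measurable)]
    congr 1
    funext i x
    rw [φ.apply_symm_apply]

end Haus
section Plumb

variable {Ω₂ : Type*} [MeasurableSpace Ω₂] (P₂ : Measure Ω₂) [IsProbabilityMeasure P₂]

lemma lpdist_le_one {μ ν : Measure ℝ} (hμ : μ univ ≤ 1) (hν : ν univ ≤ 1) :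
    levyProkhorovDist μ ν ≤ 1 := by
  rw [levyProkhorovDist]
  apply ENNReal.toReal_le_of_le_ofReal zero_le_one
  rw [ENNReal.ofReal_one]
  exact (levyProkhorovEDist_le_max_measure_univ μ ν).trans (max_le hμ hν)

lemma cutdist_extract {W W' : unitInterval × unitInterval × Ω₂ → ℝ}
    (hW : Measurable W) (hW' : Measurable W') {d : ℝ} (hd : 0 < d)
    (h : unlabCutDist (assocGraphon P₂ W) (assocGraphon P₂ W') < d) :
    ∃ φ : unitInterval ≃ᵐ unitInterval,
      MeasurePreserving φ (volume : Measure unitInterval) volume ∧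
      ∀ S T : Set unitInterval, MeasurableSet S → MeasurableSet T →
        levyProkhorovEDist (graphonInt (assocGraphon P₂ W) (S ×ˢ T))
          (graphonInt (assocGraphon P₂
            (fun z => W' (φ z.1, φ z.2.1, z.2.2))) (S ×ˢ T)) < ENNReal.ofReal d := by
  haveI : Nonempty {φ : unitInterval ≃ᵐ unitInterval //
      MeasurePreserving φ (volume : Measure unitInterval) volume} :=
    ⟨⟨MeasurableEquiv.refl _, MeasurePreserving.id _⟩⟩
  obtain ⟨φ, hφlt⟩ := exists_lt_of_ciInf_lt h
  refine ⟨φ.1, φ.2, ?_⟩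
  intro S T hS hT
  have hV' : Measurable (fun z : unitInterval × unitInterval × Ω₂ =>
      W' (φ.1 z.1, φ.1 z.2.1, z.2.2)) := by
    apply hW'.comp
    apply Measurable.prodMk (φ.1.measurable.comp measurable_fst)
    exact Measurable.prodMk (φ.1.measurable.comp (measurable_fst.comp measurable_snd))
      (measurable_snd.comp measurable_snd)
  have hker : (fun x : unitInterval × unitInterval =>
      assocGraphon P₂ W' (φ.1 x.1, φ.1 x.2)) =
      assocGraphon P₂ (fun z => W' (φ.1 z.1, φ.1 z.2.1, z.2.2)) := rfl
  have hbdd : BddAbove (Set.range fun p :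
      {S : Set unitInterval // MeasurableSet S} × {T : Set unitInterval // MeasurableSet T} =>
      levyProkhorovDist (graphonInt (assocGraphon P₂ W) (p.1.1 ×ˢ p.2.1))
        (graphonInt ((fun x : unitInterval × unitInterval =>
          assocGraphon P₂ W' (φ.1 x.1, φ.1 x.2))) (p.1.1 ×ˢ p.2.1))) := by
    refine ⟨1, ?_⟩
    rintro x ⟨p, rfl⟩
    rw [hker]
    exact lpdist_le_one (graphonInt_univ_le_one P₂ hW _) (graphonInt_univ_le_one P₂ hV' _)
  have hle : levyProkhorovDist (graphonInt (assocGraphon P₂ W) (S ×ˢ T))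
      (graphonInt (assocGraphon P₂ (fun z => W' (φ.1 z.1, φ.1 z.2.1, z.2.2))) (S ×ˢ T)) < d := by
    have := le_ciSup hbdd (⟨⟨S, hS⟩, ⟨T, hT⟩⟩ :
      {S : Set unitInterval // MeasurableSet S} × {T : Set unitInterval // MeasurableSet T})
    rw [hker] at this
    exact lt_of_le_of_lt this (by rw [← hker] at *; exact hφlt)
  -- convert to edist
  have hne : levyProkhorovEDist (graphonInt (assocGraphon P₂ W) (S ×ˢ T))
      (graphonInt (assocGraphon P₂ (fun z => W' (φ.1 z.1, φ.1 z.2.1, z.2.2))) (S ×ˢ T)) ≠ ⊤ := by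
    exact LT.lt.ne (lt_of_le_of_lt ((levyProkhorovEDist_le_max_measure_univ _ _).trans
      (max_le (graphonInt_univ_le_one P₂ hW _) (graphonInt_univ_le_one P₂ hV' _)))
      ENNReal.one_lt_top)
  rw [← ENNReal.ofReal_toReal hne]
  exact (ENNReal.ofReal_lt_ofReal_iff hd).2 hle

lemma tsum_bound {dd : ℕ → ℝ} (h0 : ∀ k, 0 ≤ dd k) (h1 : ∀ k, dd k ≤ 1) {n : ℕ} {ε : ℝ}
    (hε : 0 < ε) (hhead : ∀ k < n, dd k ≤ ε / 4) (htail : (2⁻¹ : ℝ) ^ n < ε / 2) :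
    ∑' k : ℕ, (2⁻¹ : ℝ) ^ (k + 1) * dd k < ε := by
  have hgeo : Summable fun k : ℕ => (2⁻¹ : ℝ) ^ (k + 1) := by
    simp_rw [pow_succ]
    exact (summable_geometric_of_lt_one (by norm_num) (by norm_num)).mul_right _
  have hgeo_tsum : ∑' k : ℕ, (2⁻¹ : ℝ) ^ (k + 1) = 1 := by
    simp_rw [pow_succ]
    rw [tsum_mul_right, tsum_geometric_of_lt_one (by norm_num) (by norm_num)]
    norm_num
  have hs : Summable fun k : ℕ => (2⁻¹ : ℝ) ^ (k + 1) * dd k := by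
    apply Summable.of_nonneg_of_le (fun k => mul_nonneg (by positivity) (h0 k))
      (fun k => ?_) hgeo
    calc (2⁻¹ : ℝ) ^ (k + 1) * dd k ≤ (2⁻¹ : ℝ) ^ (k + 1) * 1 := by
          apply mul_le_mul_of_nonneg_left (h1 k) (by positivity)
      _ = (2⁻¹ : ℝ) ^ (k + 1) := mul_one _
  rw [← Summable.sum_add_tsum_nat_add n hs]
  have hhead' : ∑ i ∈ Finset.range n, (2⁻¹ : ℝ) ^ (i + 1) * dd i ≤ ε / 4 := by
    calc ∑ i ∈ Finset.range n, (2⁻¹ : ℝ) ^ (i + 1) * dd i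
        ≤ ∑ i ∈ Finset.range n, (2⁻¹ : ℝ) ^ (i + 1) * (ε / 4) := by
          apply Finset.sum_le_sum
          intro i hi
          exact mul_le_mul_of_nonneg_left (hhead i (Finset.mem_range.1 hi)) (by positivity)
      _ = (∑ i ∈ Finset.range n, (2⁻¹ : ℝ) ^ (i + 1)) * (ε / 4) := by
          rw [Finset.sum_mul]
      _ ≤ 1 * (ε / 4) := by
          apply mul_le_mul_of_nonneg_right _ (by positivity)
          rw [← hgeo_tsum]
          exact Summable.sum_le_tsum _ (fun i _ => by positivity) hgeo
      _ = ε / 4 := one_mul _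
  have htail' : ∑' i : ℕ, (2⁻¹ : ℝ) ^ (i + n + 1) * dd (i + n) ≤ (2⁻¹ : ℝ) ^ n := by
    have he : ∀ i : ℕ, (2⁻¹ : ℝ) ^ (i + n + 1) * dd (i + n) ≤
        (2⁻¹ : ℝ) ^ n * (2⁻¹ : ℝ) ^ (i + 1) := by
      intro i
      have : (2⁻¹ : ℝ) ^ (i + n + 1) = (2⁻¹ : ℝ) ^ n * (2⁻¹ : ℝ) ^ (i + 1) := by
        rw [← pow_add]
        ring_nf
      rw [this]
      calc (2⁻¹:ℝ) ^ n * (2⁻¹:ℝ) ^ (i+1) * dd (i+n) ≤ (2⁻¹:ℝ)^n * (2⁻¹:ℝ)^(i+1) * 1 := by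
            apply mul_le_mul_of_nonneg_left (h1 _) (by positivity)
        _ = (2⁻¹:ℝ)^n * (2⁻¹:ℝ)^(i+1) := mul_one _
    calc ∑' i : ℕ, (2⁻¹ : ℝ) ^ (i + n + 1) * dd (i + n)
        ≤ ∑' i : ℕ, (2⁻¹ : ℝ) ^ n * (2⁻¹ : ℝ) ^ (i + 1) := by
          apply Summable.tsum_le_tsum he (hs.comp_injective (add_left_injective n)) (hgeo.mul_left _)
      _ = (2⁻¹ : ℝ) ^ n * 1 := by rw [tsum_mul_left, hgeo_tsum]
      _ = (2⁻¹ : ℝ) ^ n := mul_one _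
  linarith [htail', hhead']

end Plumb
/-- If the probability graphons associated to a sequence of
P-variables on `[0,1] × [0,1] × Ω₂` form a Cauchy sequence for the unlabelled cut
distance `δ_□`, then the P-variables form a Cauchy sequence for the metric `d_M`. -/
theorem dM_cauchy_of_unlabCutDist_cauchy
    {Ω₂ : Type*} [MeasurableSpace Ω₂] (P₂ : Measure Ω₂) [IsProbabilityMeasure P₂]
    (W : ℕ → unitInterval × unitInterval × Ω₂ → ℝ) (hW : ∀ n, Measurable (W n))
    (hcauchy : ∀ ε > (0 : ℝ), ∃ N : ℕ, ∀ m ≥ N, ∀ n ≥ N,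
      unlabCutDist (assocGraphon P₂ (W m)) (assocGraphon P₂ (W n)) < ε) :
    ∀ ε > (0 : ℝ), ∃ N : ℕ, ∀ m ≥ N, ∀ n ≥ N,
      dM (PVar.ofUnitInterval P₂ (W m) (hW m))
         (PVar.ofUnitInterval P₂ (W n) (hW n)) < ε := by
  intro ε hε
  obtain ⟨n₀, hn₀⟩ := exists_pow_lt_of_lt_one (show (0:ℝ) < ε / 2 by linarith)
    (by norm_num : (2⁻¹ : ℝ) < 1)
  have hδfun : ∀ k : ℕ, ∃ δ : ℝ, 0 < δ ∧
      ∀ (U V : unitInterval × unitInterval × Ω₂ → ℝ),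
      Measurable U → Measurable V →
      (∀ S T : Set unitInterval, MeasurableSet S → MeasurableSet T →
        levyProkhorovEDist (graphonInt (assocGraphon P₂ U) (S ×ˢ T))
          (graphonInt (assocGraphon P₂ V) (S ×ˢ T)) < ENNReal.ofReal δ) →
      ∀ f : Fin (k + 1) → unitInterval → ℝ, (∀ i, Measurable (f i)) →
        (∀ i x, f i x ∈ Icc (-1 : ℝ) 1) →
        levyProkhorovEDist (Smeasure (volume : Measure unitInterval) P₂ f U)
          (Smeasure (volume : Measure unitInterval) P₂ f V) ≤ ENNReal.ofReal (ε / 4) :=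
    fun k => exists_delta P₂ (k + 1) (show (0:ℝ) < ε / 4 by linarith)
  choose δf hδfpos hδfspec using hδfun
  have hne : (Finset.range (n₀ + 1)).Nonempty := ⟨0, by simp⟩
  set δstar : ℝ := (Finset.range (n₀ + 1)).inf' hne δf with hδstardef
  have hδstarpos : 0 < δstar := by
    rw [hδstardef, Finset.lt_inf'_iff]
    intro i _
    exact hδfpos i
  obtain ⟨N, hN⟩ := hcauchy δstar hδstarpos
  refine ⟨N, ?_⟩
  intro m hm n hn
  obtain ⟨φ, hφ, hyp⟩ := cutdist_extract P₂ (hW m) (hW n) hδstarpos (hN m hm n hn)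
  have hV' : Measurable (fun z : unitInterval × unitInterval × Ω₂ =>
      W n (φ z.1, φ z.2.1, z.2.2)) := by
    apply (hW n).comp
    apply Measurable.prodMk (φ.measurable.comp measurable_fst)
    exact Measurable.prodMk (φ.measurable.comp (measurable_fst.comp measurable_snd))
      (measurable_snd.comp measurable_snd)
  have hhead : ∀ k < n₀,
      dHLP (SkSet (volume : Measure unitInterval) P₂ (k + 1) (W m))
        (SkSet (volume : Measure unitInterval) P₂ (k + 1) (W n)) ≤ ε / 4 := by
    intro k hk
    have hδle : δstar ≤ δf k := by
      rw [hδstardef]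
      exact Finset.inf'_le δf (Finset.mem_range.2 (by omega))
    have hyp' : ∀ S T : Set unitInterval, MeasurableSet S → MeasurableSet T →
        levyProkhorovEDist (graphonInt (assocGraphon P₂ (W m)) (S ×ˢ T))
          (graphonInt (assocGraphon P₂
            (fun z => W n (φ z.1, φ z.2.1, z.2.2))) (S ×ˢ T)) <
          ENNReal.ofReal (δf k) :=
      fun S T hS hT => lt_of_lt_of_le (hyp S T hS hT) (ENNReal.ofReal_le_ofReal hδle)
    have hmatch := hδfspec k (W m) (fun z => W n (φ z.1, φ z.2.1, z.2.2))
      (hW m) hV' hyp'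
    have hd := dHLP_le_of_match P₂ (show (0:ℝ) ≤ ε / 4 by linarith) hmatch
    rwa [skset_comp P₂ (k + 1) (hW n) φ hφ] at hd
  have hdm : dM (PVar.ofUnitInterval P₂ (W m) (hW m)) (PVar.ofUnitInterval P₂ (W n) (hW n)) =
      ∑' k : ℕ, (2⁻¹ : ℝ) ^ (k + 1) *
        dHLP (SkSet (volume : Measure unitInterval) P₂ (k + 1) (W m))
          (SkSet (volume : Measure unitInterval) P₂ (k + 1) (W n)) := rfl
  rw [hdm]
  exact tsum_bound (fun k => dHLP_nonneg _ _) (fun k => dHLP_le_one P₂ (hW m) (hW n))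
    hε hhead hn₀

end
end

section
/- For every integer k ≥ 1 and every ε > 0 there exists δ > 0 such that for any probability space (Ω₂,ℙ₂) and any two P-variables U, W : [0,1] × [0,1] × Ω₂ → ℝ with d_M(U,W) ≤ δ, the quotient sets of the associated probability graphons satisfy: for every quotient R ∈ Q_k(W̃) there exists R' ∈ Q_k(Ũ) with d₁(R,R') ≤ ε, and vice versa; i.e. d_{1,H}(Q_k(W̃), Q_k(Ũ)) ≤ ε. In particular, if a sequence (W_n) of such P-variables is Cauchy in d_M, then for every k ≥ 1 the sequence of quotient sets (Q_k(W̃_n)) is Cauchy in the Hausdorff metric d_{1,H}. -/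
set_option autoImplicit false

open MeasureTheory Set
open scoped ENNReal NNReal

noncomputable section

attribute [local instance] Classical.propDecidable

/-- The quotient graph `W̃/𝒫` of a probability graphon `K` with respect to a measurable
`k`-partition `𝒫 = {P₁,…,P_k}` of `[0,1]`: vertex weights `α_i = λ(P_i)` and edge
decorations `β_{ij} = (λ(P_i)λ(P_j))⁻¹ K(P_i × P_j; ·)` (the null measure if
`λ(P_i)λ(P_j) = 0`). -/
def quotientOf (K : unitInterval × unitInterval → Measure ℝ) {k : ℕ}
    (P : Fin k → Set unitInterval) :
    (Fin k → ℝ) × (Fin k → Fin k → Measure ℝ) :=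
  (fun i => ((volume : Measure unitInterval) (P i)).toReal,
   fun i j =>
     if 0 < (volume : Measure unitInterval) (P i) *
            (volume : Measure unitInterval) (P j) then
       ((volume : Measure unitInterval) (P i) *
         (volume : Measure unitInterval) (P j))⁻¹ • graphonInt K (P i ×ˢ P j)
     else 0)

/-- The quotient set `Q_k(K)`: all quotients of `K` over measurable `k`-partitions. -/
def Qk (K : unitInterval × unitInterval → Measure ℝ) (k : ℕ) :
    Set ((Fin k → ℝ) × (Fin k → Fin k → Measure ℝ)) :=
  {q | ∃ P : Fin k → Set unitInterval, (∀ i, MeasurableSet (P i)) ∧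
    Pairwise (Function.onFun Disjoint P) ∧ (⋃ i, P i) = univ ∧ q = quotientOf K P}

/-- The distance `d₁` between two quotients:
`Σ_i |α_i − α'_i| + Σ_{i,j} d_LP(α_iα_jβ_{ij}, α'_iα'_jβ'_{ij})`. -/
def d1 {k : ℕ} (q q' : (Fin k → ℝ) × (Fin k → Fin k → Measure ℝ)) : ℝ :=
  ∑ i, |q.1 i - q'.1 i| +
    ∑ i, ∑ j, levyProkhorovDist
      (ENNReal.ofReal (q.1 i * q.1 j) • q.2 i j)
      (ENNReal.ofReal (q'.1 i * q'.1 j) • q'.2 i j)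

/-- The Hausdorff distance `d_{1,H}` between sets of quotients, induced by `d₁`. -/
def d1H {k : ℕ} (A B : Set ((Fin k → ℝ) × (Fin k → Fin k → Measure ℝ))) : ℝ :=
  (max (⨆ q ∈ A, ⨅ q' ∈ B, ENNReal.ofReal (d1 q q'))
       (⨆ q' ∈ B, ⨅ q ∈ A, ENNReal.ofReal (d1 q q'))).toReal

universe u

open Metric

namespace Prf

/-- coordinate distance bound in Euclidean space -/
lemma coord_dist_le {n : ℕ} (u v : RE n) (i : Fin n) : dist (u i) (v i) ≤ dist u v := by
  rw [EuclideanSpace.dist_eq]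
  have h1 : dist (u i) (v i) = Real.sqrt (dist (u i) (v i) ^ 2) := by
    rw [Real.sqrt_sq dist_nonneg]
  rw [h1]
  apply Real.sqrt_le_sqrt
  exact Finset.single_le_sum (f := fun j => dist (u j) (v j) ^ 2)
    (fun j _ => sq_nonneg _) (Finset.mem_univ i)

def idxA {k : ℕ} (i : Fin k) : Fin (2*k+1) := ⟨2*i, by omega⟩
def idxB {k : ℕ} (i : Fin k) : Fin (2*k+1) := ⟨2*i+1, by omega⟩
def idxW {k : ℕ} : Fin (2*k+1) := ⟨2*k, by omega⟩

variable {Ω₁ Ω₂ : Type*} [MeasurableSpace Ω₁] [MeasurableSpace Ω₂]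

lemma sVec_idxA {k : ℕ} (f : Fin k → Ω₁ → ℝ) (W : Ω₁ × Ω₁ × Ω₂ → ℝ)
    (x : Ω₁ × Ω₁ × Ω₂) (i : Fin k) :
    sVec k f W x (idxA i) = f i x.1 := by
  have h1 : ((idxA i : Fin (2*k+1)) : ℕ) = 2*i := rfl
  simp only [sVec, WithLp.equiv_symm_apply, WithLp.ofLp_toLp, h1]
  rw [dif_pos (by omega), if_pos (by omega)]
  congr 1
  exact Fin.ext (by simp only []; omega)

lemma sVec_idxB {k : ℕ} (f : Fin k → Ω₁ → ℝ) (W : Ω₁ × Ω₁ × Ω₂ → ℝ)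
    (x : Ω₁ × Ω₁ × Ω₂) (i : Fin k) :
    sVec k f W x (idxB i) = f i x.2.1 := by
  have h1 : ((idxB i : Fin (2*k+1)) : ℕ) = 2*i+1 := rfl
  simp only [sVec, WithLp.equiv_symm_apply, WithLp.ofLp_toLp, h1]
  rw [dif_pos (by omega), if_neg (by omega)]
  congr 1
  exact Fin.ext (by simp only []; omega)

lemma sVec_idxW {k : ℕ} (f : Fin k → Ω₁ → ℝ) (W : Ω₁ × Ω₁ × Ω₂ → ℝ)
    (x : Ω₁ × Ω₁ × Ω₂) :
    sVec k f W x idxW = W x := by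
  have h1 : ((idxW : Fin (2*k+1)) : ℕ) = 2*k := rfl
  simp only [sVec, WithLp.equiv_symm_apply, WithLp.ofLp_toLp, h1]
  rw [dif_neg (by omega)]

lemma measurable_sVec {k : ℕ} {f : Fin k → Ω₁ → ℝ}
    {W : Ω₁ × Ω₁ × Ω₂ → ℝ}
    (hf : ∀ i, Measurable (f i)) (hW : Measurable W) : Measurable (sVec k f W) := by
  have : Measurable fun (x : Ω₁ × Ω₁ × Ω₂) (l : Fin (2*k+1)) =>
      (sVec k f W x) l := by
    apply measurable_pi_iff.mpr
    intro l
    simp only [sVec, WithLp.equiv_symm_apply, WithLp.ofLp_toLp]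
    by_cases h : (l : ℕ) < 2*k
    · simp only [dif_pos h]
      by_cases h2 : (l : ℕ) % 2 = 0
      · simp only [if_pos h2]; exact (hf _).comp measurable_fst
      · simp only [if_neg h2]; exact (hf _).comp (measurable_fst.comp measurable_snd)
    · simp only [dif_neg h]; exact hW
  exact (MeasurableEquiv.toLp 2 (Fin (2*k+1) → ℝ)).measurable.comp this

lemma measurable_coordSet {n : ℕ} {s : Set (RE n)}
    (h : MeasurableSet {y : Fin n → ℝ | (MeasurableEquiv.toLp 2 (Fin n → ℝ)) y ∈ s}) :
    MeasurableSet s := by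
  have := (MeasurableEquiv.toLp 2 (Fin n → ℝ)).symm.measurable h
  simpa using this

end Prf
namespace Prf
set_option linter.unusedSectionVars false

variable {Ω₂ : Type*} [MeasurableSpace Ω₂] (P₂ : Measure Ω₂) [IsProbabilityMeasure P₂]

abbrev UI := unitInterval

lemma meas_slice {W : UI × UI × Ω₂ → ℝ} (hW : Measurable W) {C : Set ℝ}
    (hC : MeasurableSet C) :
    Measurable fun p : UI × UI => P₂ {ω | W (p.1, p.2, ω) ∈ C} := by
  have hW2 : Measurable fun y : (UI × UI) × Ω₂ => W (y.1.1, y.1.2, y.2) :=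
    hW.comp MeasurableEquiv.prodAssoc.measurable
  have hs : MeasurableSet {y : (UI × UI) × Ω₂ | W (y.1.1, y.1.2, y.2) ∈ C} := hW2 hC
  exact measurable_measure_prodMk_left hs

lemma measurable_assocGraphon {W : UI × UI × Ω₂ → ℝ} (hW : Measurable W) :
    Measurable (assocGraphon P₂ W) := by
  apply Measure.measurable_of_measurable_coe
  intro s hs
  have h1 : ∀ p : UI × UI, assocGraphon P₂ W p s = P₂ {ω | W (p.1, p.2, ω) ∈ s} := by
    intro p
    exact Measure.map_apply ((hW.comp measurable_prodMk_left).comp measurable_prodMk_left) hs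
  rw [show (fun p : UI × UI => assocGraphon P₂ W p s)
      = fun p => P₂ {ω | W (p.1, p.2, ω) ∈ s} from funext h1]
  exact meas_slice P₂ hW hs

lemma graphonInt_prod_apply {W : UI × UI × Ω₂ → ℝ} (hW : Measurable W)
    {A B : Set UI} (hA : MeasurableSet A) (hB : MeasurableSet B) {C : Set ℝ}
    (hC : MeasurableSet C) :
    graphonInt (assocGraphon P₂ W) (A ×ˢ B) C
      = (volume.prod (volume.prod P₂)) {x : UI × UI × Ω₂ | x.1 ∈ A ∧ x.2.1 ∈ B ∧ W x ∈ C} := by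
  set ρ := (volume : Measure UI).prod (volume : Measure UI) with hρ
  have hK := measurable_assocGraphon P₂ hW
  rw [graphonInt, Measure.bind_apply hC hK.aemeasurable]
  have h1 : ∀ p : UI × UI, assocGraphon P₂ W p C = P₂ {ω | W (p.1, p.2, ω) ∈ C} := fun p =>
    Measure.map_apply ((hW.comp measurable_prodMk_left).comp measurable_prodMk_left) hC
  -- RHS computation
  have hW2 : Measurable fun y : (UI × UI) × Ω₂ => W (y.1.1, y.1.2, y.2) :=
    hW.comp MeasurableEquiv.prodAssoc.measurable
  have hT : MeasurableSet {x : UI × UI × Ω₂ | x.1 ∈ A ∧ x.2.1 ∈ B ∧ W x ∈ C} := by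
    refine (hA.preimage measurable_fst).inter ?_
    exact ((hB.preimage (measurable_fst.comp measurable_snd)).inter (hW hC))
  have hmap : (volume.prod (volume.prod P₂) : Measure (UI × UI × Ω₂))
      = Measure.map MeasurableEquiv.prodAssoc (ρ.prod P₂) := by
    rw [hρ, Measure.prodAssoc_prod]
  rw [hmap, Measure.map_apply MeasurableEquiv.prodAssoc.measurable hT]
  have hpre : (MeasurableEquiv.prodAssoc ⁻¹'
      {x : UI × UI × Ω₂ | x.1 ∈ A ∧ x.2.1 ∈ B ∧ W x ∈ C})
      = {y : (UI × UI) × Ω₂ | y.1.1 ∈ A ∧ y.1.2 ∈ B ∧ W (y.1.1, y.1.2, y.2) ∈ C} := by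
    ext ⟨⟨a, b⟩, c⟩
    simp [MeasurableEquiv.prodAssoc, Equiv.prodAssoc]
  rw [hpre]
  have hpreMble : MeasurableSet
      {y : (UI × UI) × Ω₂ | y.1.1 ∈ A ∧ y.1.2 ∈ B ∧ W (y.1.1, y.1.2, y.2) ∈ C} := by
    refine (hA.preimage (measurable_fst.comp measurable_fst)).inter ?_
    exact (hB.preimage (measurable_snd.comp measurable_fst)).inter (hW2 hC)
  rw [Measure.prod_apply hpreMble]
  have hfun : ∀ p : UI × UI,
      P₂ (Prod.mk p ⁻¹' {y : (UI × UI) × Ω₂ | y.1.1 ∈ A ∧ y.1.2 ∈ B ∧ W (y.1.1, y.1.2, y.2) ∈ C})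
      = (A ×ˢ B).indicator (fun p : UI × UI => P₂ {ω | W (p.1, p.2, ω) ∈ C}) p := by
    intro p
    by_cases hp : p ∈ A ×ˢ B
    · rw [Set.indicator_of_mem hp]
      congr 1
      ext ω
      simp only [Set.mem_preimage, Set.mem_setOf_eq]
      exact ⟨fun h => h.2.2, fun h => ⟨hp.1, hp.2, h⟩⟩
    · rw [Set.indicator_of_notMem hp]
      convert measure_empty (μ := P₂)
      ext ω
      simp only [Set.mem_preimage, Set.mem_setOf_eq, Set.mem_empty_iff_false, iff_false]
      intro h
      exact hp ⟨h.1, h.2.1⟩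
  calc ∫⁻ p, assocGraphon P₂ W p C ∂(ρ.restrict (A ×ˢ B))
      = ∫⁻ p, P₂ {ω | W (p.1, p.2, ω) ∈ C} ∂(ρ.restrict (A ×ˢ B)) := by
        exact lintegral_congr h1
    _ = ∫⁻ p, (A ×ˢ B).indicator (fun p : UI × UI => P₂ {ω | W (p.1, p.2, ω) ∈ C}) p ∂ρ := by
        rw [lintegral_indicator (hA.prod hB)]
    _ = ∫⁻ p, P₂ (Prod.mk p ⁻¹'
          {y : (UI × UI) × Ω₂ | y.1.1 ∈ A ∧ y.1.2 ∈ B ∧ W (y.1.1, y.1.2, y.2) ∈ C}) ∂ρ := by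
        exact lintegral_congr fun p => (hfun p).symm

end Prf
namespace Prf
set_option linter.unusedSectionVars false
set_option maxHeartbeats 1000000

variable {Ω₂ : Type*} [MeasurableSpace Ω₂] (P₂ : Measure Ω₂) [IsProbabilityMeasure P₂]

lemma measurable_apply_RE {n : ℕ} (l : Fin n) : Measurable fun v : RE n => v l :=
  (measurable_pi_apply l).comp (MeasurableEquiv.toLp 2 (Fin n → ℝ)).symm.measurable

lemma thickening_subset_of_coord {n : ℕ} {η : ℝ} {S T : Set (RE n)}
    (h : ∀ u v : RE n, v ∈ S → (∀ l, |u l - v l| < η) → u ∈ T) :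
    Metric.thickening η S ⊆ T := by
  intro u hu
  obtain ⟨v, hv, hd⟩ := Metric.mem_thickening_iff.1 hu
  refine h u v hv fun l => lt_of_le_of_lt ?_ hd
  rw [← Real.dist_eq]; exact coord_dist_le u v l

lemma m_fst_apply {A : Set unitInterval} (hA : MeasurableSet A) :
    (volume.prod (volume.prod P₂)) {x : unitInterval × unitInterval × Ω₂ | x.1 ∈ A}
      = volume A := by
  have h : {x : unitInterval × unitInterval × Ω₂ | x.1 ∈ A}
      = A ×ˢ (Set.univ : Set (unitInterval × Ω₂)) := by
    ext ⟨a, b, c⟩; simp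
  rw [h, Measure.prod_prod, measure_univ, mul_one]

lemma m_snd_apply {A : Set unitInterval} (hA : MeasurableSet A) :
    (volume.prod (volume.prod P₂)) {x : unitInterval × unitInterval × Ω₂ | x.2.1 ∈ A}
      = volume A := by
  have h : {x : unitInterval × unitInterval × Ω₂ | x.2.1 ∈ A}
      = (Set.univ : Set unitInterval) ×ˢ (A ×ˢ (Set.univ : Set Ω₂)) := by
    ext ⟨a, b, c⟩; simp
  rw [h, Measure.prod_prod, Measure.prod_prod, measure_univ, measure_univ, mul_one, one_mul]

lemma Smeasure_apply {k : ℕ} {f : Fin k → unitInterval → ℝ}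
    {W : unitInterval × unitInterval × Ω₂ → ℝ} (hf : ∀ i, Measurable (f i))
    (hW : Measurable W) {B : Set (RE (2*k+1))} (hB : MeasurableSet B) :
    Smeasure (volume : Measure unitInterval) P₂ f W B
      = (volume.prod (volume.prod P₂)) ((sVec k f W) ⁻¹' B) :=
  Measure.map_apply (measurable_sVec hf hW) hB

/-- indicator functions of a family of sets -/
def fInd {k : ℕ} (P : Fin k → Set unitInterval) : Fin k → unitInterval → ℝ :=
  fun i => (P i).indicator 1

lemma fInd_mem {k : ℕ} {P : Fin k → Set unitInterval} {i : Fin k} {x : unitInterval}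
    (h : x ∈ P i) : fInd P i x = 1 := by simp [fInd, Set.indicator_of_mem h]

lemma fInd_not_mem {k : ℕ} {P : Fin k → Set unitInterval} {i : Fin k} {x : unitInterval}
    (h : x ∉ P i) : fInd P i x = 0 := by simp [fInd, Set.indicator_of_notMem h]

lemma measurable_fInd {k : ℕ} {P : Fin k → Set unitInterval}
    (hP : ∀ i, MeasurableSet (P i)) (i : Fin k) : Measurable (fInd P i) :=
  measurable_const.indicator (hP i)

lemma fInd_Icc {k : ℕ} (P : Fin k → Set unitInterval) (i : Fin k) (x : unitInterval) :
    fInd P i x ∈ Set.Icc (-1 : ℝ) 1 := by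
  by_cases h : x ∈ P i
  · rw [fInd_mem h]; norm_num
  · rw [fInd_not_mem h]; norm_num

/-- rounded cells from arbitrary test functions -/
def mainCell {k : ℕ} (g : Fin k → unitInterval → ℝ) (i : Fin k) : Set unitInterval :=
  {x | 1/2 < g i x ∧ ∀ l, l < i → g l x ≤ 1/2}

def extraCell {k : ℕ} (g : Fin k → unitInterval → ℝ) : Set unitInterval :=
  {x | ∀ l, g l x ≤ 1/2}

def Pcell {k : ℕ} (g : Fin k → unitInterval → ℝ) (i : Fin k) : Set unitInterval :=
  mainCell g i ∪ (if (i : ℕ) = 0 then extraCell g else ∅)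

lemma measurable_mainCell {k : ℕ} {g : Fin k → unitInterval → ℝ}
    (hg : ∀ i, Measurable (g i)) (i : Fin k) : MeasurableSet (mainCell g i) := by
  have h1 : mainCell g i = {x | 1/2 < g i x} ∩ ⋂ l : Fin k, {x | l < i → g l x ≤ 1/2} := by
    ext x; simp [mainCell]
  rw [h1]
  refine (measurableSet_lt measurable_const (hg i)).inter (MeasurableSet.iInter fun l => ?_)
  by_cases h : l < i
  · have h2 : {x : unitInterval | l < i → g l x ≤ 1/2} = {x | g l x ≤ 1/2} := by
      ext x; simp [h]
    rw [h2]; exact measurableSet_le (hg l) measurable_const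
  · have h2 : {x : unitInterval | l < i → g l x ≤ 1/2} = Set.univ := by
      ext x; simp [h]
    rw [h2]; exact MeasurableSet.univ

lemma measurable_extraCell {k : ℕ} {g : Fin k → unitInterval → ℝ}
    (hg : ∀ i, Measurable (g i)) : MeasurableSet (extraCell g) := by
  have h1 : extraCell g = ⋂ l : Fin k, {x | g l x ≤ 1/2} := by ext x; simp [extraCell]
  rw [h1]
  exact MeasurableSet.iInter fun l => measurableSet_le (hg l) measurable_const

lemma measurable_Pcell {k : ℕ} {g : Fin k → unitInterval → ℝ}
    (hg : ∀ i, Measurable (g i)) (i : Fin k) : MeasurableSet (Pcell g i) := by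
  rw [Pcell]
  refine (measurable_mainCell hg i).union ?_
  split_ifs
  · exact measurable_extraCell hg
  · exact MeasurableSet.empty

lemma mem_extra_elim {k : ℕ} {g : Fin k → unitInterval → ℝ} {i : Fin k} {x : unitInterval}
    (hx : x ∈ (if (i : ℕ) = 0 then extraCell g else ∅)) : ∀ l, g l x ≤ 1/2 := by
  split_ifs at hx with h
  · exact hx
  · exact absurd hx (Set.notMem_empty x)

lemma pairwise_Pcell {k : ℕ} (g : Fin k → unitInterval → ℝ) :
    Pairwise (Function.onFun Disjoint (Pcell g)) := by
  intro i j hij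
  rw [Function.onFun, Set.disjoint_left]
  rintro x (⟨hxi, hxi2⟩ | hxe) (⟨hxj, hxj2⟩ | hxe')
  · rcases lt_or_gt_of_ne hij with h | h
    · exact absurd (hxj2 i h) (not_le.mpr hxi)
    · exact absurd (hxi2 j h) (not_le.mpr hxj)
  · exact absurd (mem_extra_elim hxe' i) (not_le.mpr hxi)
  · exact absurd (mem_extra_elim hxe j) (not_le.mpr hxj)
  · have hi0 : (i : ℕ) = 0 := by by_contra h; simp [h] at hxe
    have hj0 : (j : ℕ) = 0 := by by_contra h; simp [h] at hxe'
    exact hij (Fin.ext (hi0.trans hj0.symm))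

lemma iUnion_Pcell {k : ℕ} (hk : 0 < k) (g : Fin k → unitInterval → ℝ) :
    (⋃ i, Pcell g i) = Set.univ := by
  ext x
  simp only [Set.mem_iUnion, Set.mem_univ, iff_true]
  by_cases h : ∃ l, 1/2 < g l x
  · have hne : (Finset.univ.filter fun l : Fin k => 1/2 < g l x).Nonempty := by
      obtain ⟨l, hl⟩ := h
      exact ⟨l, by simpa using hl⟩
    set i0 := (Finset.univ.filter fun l : Fin k => 1/2 < g l x).min' hne with hi0
    refine ⟨i0, Or.inl ⟨?_, ?_⟩⟩
    · have := (Finset.univ.filter fun l : Fin k => 1/2 < g l x).min'_mem hne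
      rw [← hi0] at this
      simpa using this
    · intro l hl
      by_contra hcon
      have hmem : l ∈ Finset.univ.filter fun l : Fin k => 1/2 < g l x := by
        simpa using not_le.mp hcon
      have := Finset.min'_le _ l hmem
      rw [← hi0] at this
      exact absurd hl (not_lt.mpr this)
  · push_neg at h
    refine ⟨⟨0, hk⟩, Or.inr ?_⟩
    have h0 : ((⟨0, hk⟩ : Fin k) : ℕ) = 0 := rfl
    rw [if_pos h0]
    exact h

end Prf
namespace Prf
set_option linter.unusedSectionVars false
set_option maxHeartbeats 1000000

open Metric

variable {Ω₂ : Type*} [MeasurableSpace Ω₂] {P₂ : Measure Ω₂} [IsProbabilityMeasure P₂]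
variable {k : ℕ} {P : Fin k → Set unitInterval} {g : Fin k → unitInterval → ℝ}
variable {W U : unitInterval × unitInterval × Ω₂ → ℝ} {η : ℝ}

section Estimates

variable (hPm : ∀ i, MeasurableSet (P i)) (hPd : Pairwise (Function.onFun Disjoint P))
variable (hPu : (⋃ i, P i) = Set.univ)
variable (hg : ∀ i, Measurable (g i)) (hW : Measurable W) (hU : Measurable U)
variable (hη : 0 < η) (hη4 : η < 1/4)
variable (hLP : levyProkhorovEDist (Smeasure (volume : Measure unitInterval) P₂ (fInd P) W)
    (Smeasure (volume : Measure unitInterval) P₂ g U) < ENNReal.ofReal η)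

include hg hU in
/-- ν of a measurable set in terms of the base product measure. -/
lemma nu_apply {B : Set (RE (2*k+1))} (hB : MeasurableSet B) :
    Smeasure (volume : Measure unitInterval) P₂ g U B
      = (volume.prod (volume.prod P₂)) ((sVec k g U) ⁻¹' B) :=
  Smeasure_apply P₂ hg hU hB

include hPm hW in
lemma mu_apply {B : Set (RE (2*k+1))} (hB : MeasurableSet B) :
    Smeasure (volume : Measure unitInterval) P₂ (fInd P) W B
      = (volume.prod (volume.prod P₂)) ((sVec k (fInd P) W) ⁻¹' B) :=
  Smeasure_apply P₂ (measurable_fInd hPm) hW hB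

include hPm hPd hPu hg hW hU hη hη4 hLP

/-- Pair estimate: the rounded cells nearly don't overlap. -/
lemma Epair {i l : Fin k} (hil : i ≠ l) :
    volume {x : unitInterval | 1/2 < g i x ∧ 1/2 < g l x} ≤ ENNReal.ofReal η := by
  set B : Set (RE (2*k+1)) := {v | 1/2 < v (idxA i) ∧ 1/2 < v (idxA l)} with hBdef
  have hB : MeasurableSet B :=
    (measurableSet_lt measurable_const (measurable_apply_RE _)).inter
      (measurableSet_lt measurable_const (measurable_apply_RE _))
  have hpre : (sVec k g U) ⁻¹' B = {x | 1/2 < g i x.1 ∧ 1/2 < g l x.1} := by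
    ext x; simp [hBdef, Set.mem_preimage, sVec_idxA]
  have hset : {x : unitInterval × unitInterval × Ω₂ | 1/2 < g i x.1 ∧ 1/2 < g l x.1}
      = {x : unitInterval × unitInterval × Ω₂ |
          x.1 ∈ {y : unitInterval | 1/2 < g i y ∧ 1/2 < g l y}} := rfl
  have hν : Smeasure (volume : Measure unitInterval) P₂ g U B
      = volume {y : unitInterval | 1/2 < g i y ∧ 1/2 < g l y} := by
    rw [nu_apply hg hU hB, hpre, hset,
      m_fst_apply _ (show MeasurableSet {y : unitInterval | 1/2 < g i y ∧ 1/2 < g l y} from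
        (measurableSet_lt measurable_const (hg i)).inter
          (measurableSet_lt measurable_const (hg l)))]
  have hth : thickening (ENNReal.ofReal η).toReal B
      ⊆ {v : RE (2*k+1) | 1/2 - η < v (idxA i) ∧ 1/2 - η < v (idxA l)} := by
    rw [ENNReal.toReal_ofReal hη.le]
    refine thickening_subset_of_coord fun u v hv hl2 => ?_
    have h1 := abs_lt.1 (hl2 (idxA i))
    have h2 := abs_lt.1 (hl2 (idxA l))
    exact ⟨by linarith [hv.1], by linarith [hv.2]⟩
  have hmu0 : Smeasure (volume : Measure unitInterval) P₂ (fInd P) W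
      {v : RE (2*k+1) | 1/2 - η < v (idxA i) ∧ 1/2 - η < v (idxA l)} = 0 := by
    have hBm : MeasurableSet {v : RE (2*k+1) | 1/2 - η < v (idxA i) ∧ 1/2 - η < v (idxA l)} :=
      (measurableSet_lt measurable_const (measurable_apply_RE _)).inter
        (measurableSet_lt measurable_const (measurable_apply_RE _))
    rw [mu_apply hPm hW hBm]
    convert measure_empty (μ := (volume.prod (volume.prod P₂)))
    ext x
    simp only [Set.mem_preimage, Set.mem_setOf_eq, sVec_idxA, Set.mem_empty_iff_false,
      iff_false, not_and]
    intro h1 h2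
    by_cases hxi : x.1 ∈ P i
    · by_cases hxl : x.1 ∈ P l
      · exact absurd hxl (Set.disjoint_left.mp (hPd hil) hxi)
      · rw [fInd_not_mem hxl] at h2; linarith
    · rw [fInd_not_mem hxi] at h1; linarith
  have h := right_measure_le_of_levyProkhorovEDist_lt hLP hB
  rw [hν] at h
  calc volume {y : unitInterval | 1/2 < g i y ∧ 1/2 < g l y}
      ≤ Smeasure (volume : Measure unitInterval) P₂ (fInd P) W
          (thickening (ENNReal.ofReal η).toReal B) + ENNReal.ofReal η := h
    _ ≤ Smeasure (volume : Measure unitInterval) P₂ (fInd P) W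
          {v : RE (2*k+1) | 1/2 - η < v (idxA i) ∧ 1/2 - η < v (idxA l)}
          + ENNReal.ofReal η := add_le_add_left (measure_mono hth) _
    _ = ENNReal.ofReal η := by rw [hmu0, zero_add]

/-- the leftover cell is small -/
lemma Eextra : volume (extraCell g) ≤ ENNReal.ofReal η := by
  set B : Set (RE (2*k+1)) := {v | ∀ l : Fin k, v (idxA l) ≤ 1/2} with hBdef
  have hB : MeasurableSet B := by
    have : B = ⋂ l : Fin k, {v : RE (2*k+1) | v (idxA l) ≤ 1/2} := by ext v; simp [hBdef]
    rw [this]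
    exact MeasurableSet.iInter fun l => measurableSet_le (measurable_apply_RE _) measurable_const
  have hν : Smeasure (volume : Measure unitInterval) P₂ g U B = volume (extraCell g) := by
    rw [nu_apply hg hU hB]
    have hpre : (sVec k g U) ⁻¹' B
        = {x : unitInterval × unitInterval × Ω₂ | x.1 ∈ extraCell g} := by
      ext x; simp [hBdef, Set.mem_preimage, sVec_idxA, extraCell]
    rw [hpre, m_fst_apply _ (measurable_extraCell hg)]
  have hth : thickening (ENNReal.ofReal η).toReal B
      ⊆ {v : RE (2*k+1) | ∀ l : Fin k, v (idxA l) < 1/2 + η} := by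
    rw [ENNReal.toReal_ofReal hη.le]
    refine thickening_subset_of_coord fun u v hv hl2 => fun l => ?_
    have h1 := abs_lt.1 (hl2 (idxA l))
    have hv' : v (idxA l) ≤ 1/2 := hv l
    simp only [Set.mem_setOf_eq]
    linarith [h1.1, h1.2]
  have hmu0 : Smeasure (volume : Measure unitInterval) P₂ (fInd P) W
      {v : RE (2*k+1) | ∀ l : Fin k, v (idxA l) < 1/2 + η} = 0 := by
    have hBm : MeasurableSet {v : RE (2*k+1) | ∀ l : Fin k, v (idxA l) < 1/2 + η} := by
      have : {v : RE (2*k+1) | ∀ l : Fin k, v (idxA l) < 1/2 + η}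
          = ⋂ l : Fin k, {v : RE (2*k+1) | v (idxA l) < 1/2 + η} := by ext v; simp
      rw [this]
      exact MeasurableSet.iInter fun l =>
        measurableSet_lt (measurable_apply_RE _) measurable_const
    rw [mu_apply hPm hW hBm]
    convert measure_empty (μ := (volume.prod (volume.prod P₂)))
    ext x
    simp only [Set.mem_preimage, Set.mem_setOf_eq, sVec_idxA, Set.mem_empty_iff_false, iff_false,
      not_forall, not_lt]
    have hx : x.1 ∈ ⋃ i, P i := hPu ▸ Set.mem_univ x.1
    obtain ⟨l, hl⟩ := Set.mem_iUnion.1 hx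
    exact ⟨l, by rw [fInd_mem hl]; linarith⟩
  have h := right_measure_le_of_levyProkhorovEDist_lt hLP hB
  rw [hν] at h
  calc volume (extraCell g)
      ≤ Smeasure (volume : Measure unitInterval) P₂ (fInd P) W
          (thickening (ENNReal.ofReal η).toReal B) + ENNReal.ofReal η := h
    _ ≤ 0 + ENNReal.ofReal η := by
        rw [← hmu0]; exact add_le_add_left (measure_mono hth) _
    _ = ENNReal.ofReal η := by rw [zero_add]

/-- upper bound for half-level sets of g -/
lemma Ehalf_up (i : Fin k) :
    volume {x : unitInterval | 1/2 < g i x} ≤ volume (P i) + ENNReal.ofReal η := by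
  set B : Set (RE (2*k+1)) := {v | 1/2 < v (idxA i)} with hBdef
  have hB : MeasurableSet B := measurableSet_lt measurable_const (measurable_apply_RE _)
  have hν : Smeasure (volume : Measure unitInterval) P₂ g U B
      = volume {x : unitInterval | 1/2 < g i x} := by
    rw [nu_apply hg hU hB]
    have hpre : (sVec k g U) ⁻¹' B
        = {x : unitInterval × unitInterval × Ω₂ | x.1 ∈ {y | 1/2 < g i y}} := by
      ext x; simp [hBdef, Set.mem_preimage, sVec_idxA]
    rw [hpre, m_fst_apply _ (measurableSet_lt measurable_const (hg i))]
  have hth : thickening (ENNReal.ofReal η).toReal B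
      ⊆ {v : RE (2*k+1) | 1/2 - η < v (idxA i)} := by
    rw [ENNReal.toReal_ofReal hη.le]
    refine thickening_subset_of_coord fun u v hv hl2 => ?_
    have h1 := abs_lt.1 (hl2 (idxA i))
    have hv' : (1:ℝ)/2 < v (idxA i) := hv
    simp only [Set.mem_setOf_eq]
    linarith [h1.1, h1.2]
  have hmu : Smeasure (volume : Measure unitInterval) P₂ (fInd P) W
      {v : RE (2*k+1) | 1/2 - η < v (idxA i)} = volume (P i) := by
    have hBm : MeasurableSet {v : RE (2*k+1) | 1/2 - η < v (idxA i)} :=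
      measurableSet_lt measurable_const (measurable_apply_RE _)
    rw [mu_apply hPm hW hBm]
    have hpre : (sVec k (fInd P) W) ⁻¹' {v : RE (2*k+1) | 1/2 - η < v (idxA i)}
        = {x : unitInterval × unitInterval × Ω₂ | x.1 ∈ P i} := by
      ext x
      simp only [Set.mem_preimage, Set.mem_setOf_eq, sVec_idxA]
      by_cases hxi : x.1 ∈ P i
      · rw [fInd_mem hxi]; exact iff_of_true (by linarith) hxi
      · rw [fInd_not_mem hxi]; exact iff_of_false (by linarith) hxi
    rw [hpre, m_fst_apply _ (hPm i)]
  have h := right_measure_le_of_levyProkhorovEDist_lt hLP hB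
  rw [hν] at h
  calc volume {x : unitInterval | 1/2 < g i x}
      ≤ Smeasure (volume : Measure unitInterval) P₂ (fInd P) W
          (thickening (ENNReal.ofReal η).toReal B) + ENNReal.ofReal η := h
    _ ≤ volume (P i) + ENNReal.ofReal η := by
        rw [← hmu]; exact add_le_add_left (measure_mono hth) _

/-- lower bound -/
lemma Ehalf_down (i : Fin k) :
    volume (P i) ≤ volume {x : unitInterval | 1/2 < g i x} + ENNReal.ofReal η := by
  set B : Set (RE (2*k+1)) := {v | 3/4 ≤ v (idxA i)} with hBdef
  have hB : MeasurableSet B := measurableSet_le measurable_const (measurable_apply_RE _)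
  have hμ : Smeasure (volume : Measure unitInterval) P₂ (fInd P) W B = volume (P i) := by
    rw [mu_apply hPm hW hB]
    have hpre : (sVec k (fInd P) W) ⁻¹' B
        = {x : unitInterval × unitInterval × Ω₂ | x.1 ∈ P i} := by
      ext x
      simp only [hBdef, Set.mem_preimage, Set.mem_setOf_eq, sVec_idxA]
      by_cases hxi : x.1 ∈ P i
      · rw [fInd_mem hxi]; exact iff_of_true (by linarith) hxi
      · rw [fInd_not_mem hxi]; exact iff_of_false (by linarith) hxi
    rw [hpre, m_fst_apply _ (hPm i)]
  have hth : thickening (ENNReal.ofReal η).toReal B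
      ⊆ {v : RE (2*k+1) | 1/2 < v (idxA i)} := by
    rw [ENNReal.toReal_ofReal hη.le]
    refine thickening_subset_of_coord fun u v hv hl2 => ?_
    have h1 := abs_lt.1 (hl2 (idxA i))
    have hv' : (3:ℝ)/4 ≤ v (idxA i) := hv
    simp only [Set.mem_setOf_eq]
    linarith [h1.1, h1.2]
  have hν : Smeasure (volume : Measure unitInterval) P₂ g U
      {v : RE (2*k+1) | 1/2 < v (idxA i)} = volume {x : unitInterval | 1/2 < g i x} := by
    have hBm : MeasurableSet {v : RE (2*k+1) | 1/2 < v (idxA i)} :=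
      measurableSet_lt measurable_const (measurable_apply_RE _)
    rw [nu_apply hg hU hBm]
    have hpre : (sVec k g U) ⁻¹' {v : RE (2*k+1) | 1/2 < v (idxA i)}
        = {x : unitInterval × unitInterval × Ω₂ | x.1 ∈ {y | 1/2 < g i y}} := by
      ext x; simp [Set.mem_preimage, sVec_idxA]
    rw [hpre, m_fst_apply _ (measurableSet_lt measurable_const (hg i))]
  have h := left_measure_le_of_levyProkhorovEDist_lt hLP hB
  rw [hμ] at h
  calc volume (P i)
      ≤ Smeasure (volume : Measure unitInterval) P₂ g U
          (thickening (ENNReal.ofReal η).toReal B) + ENNReal.ofReal η := h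
    _ ≤ volume {x : unitInterval | 1/2 < g i x} + ENNReal.ofReal η := by
        rw [← hν]; exact add_le_add_left (measure_mono hth) _

end Estimates
end Prf
namespace Prf
set_option linter.unusedSectionVars false
set_option maxHeartbeats 2000000

open Metric

variable {Ω₂ : Type*} [MeasurableSpace Ω₂] {P₂ : Measure Ω₂} [IsProbabilityMeasure P₂]
variable {k : ℕ} {P : Fin k → Set unitInterval} {g : Fin k → unitInterval → ℝ}
variable {W U : unitInterval × unitInterval × Ω₂ → ℝ} {η : ℝ}

section Assembly

variable (hPm : ∀ i, MeasurableSet (P i)) (hPd : Pairwise (Function.onFun Disjoint P))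
variable (hPu : (⋃ i, P i) = Set.univ)
variable (hg : ∀ i, Measurable (g i)) (hW : Measurable W) (hU : Measurable U)
variable (hη : 0 < η) (hη4 : η < 1/4)
variable (hLP : levyProkhorovEDist (Smeasure (volume : Measure unitInterval) P₂ (fInd P) W)
    (Smeasure (volume : Measure unitInterval) P₂ g U) < ENNReal.ofReal η)

include hPm hPd hPu hg hW hU hη hη4 hLP

lemma alpha_up (i : Fin k) :
    volume (Pcell g i) ≤ volume (P i) + 2 * ENNReal.ofReal η := by
  calc volume (Pcell g i)
      ≤ volume (mainCell g i) + volume (if (i : ℕ) = 0 then extraCell g else ∅) :=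
        measure_union_le _ _
    _ ≤ volume {x : unitInterval | 1/2 < g i x} + ENNReal.ofReal η := by
        refine add_le_add (measure_mono fun x hx => hx.1) ?_
        split_ifs
        · exact Eextra hPm hPd hPu hg hW hU hη hη4 hLP
        · simp
    _ ≤ (volume (P i) + ENNReal.ofReal η) + ENNReal.ofReal η :=
        add_le_add_left (Ehalf_up hPm hPd hPu hg hW hU hη hη4 hLP i) _
    _ = volume (P i) + 2 * ENNReal.ofReal η := by ring

lemma alpha_down (i : Fin k) :
    volume (P i) ≤ volume (Pcell g i) + (k + 1 : ℕ) * ENNReal.ofReal η := by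
  have hsub : {x : unitInterval | 1/2 < g i x} ⊆ mainCell g i ∪
      ⋃ l : Fin k, (if l < i then {x : unitInterval | 1/2 < g i x ∧ 1/2 < g l x} else ∅) := by
    intro x hx
    by_cases h : ∀ l, l < i → g l x ≤ 1/2
    · exact Or.inl ⟨hx, h⟩
    · push_neg at h
      obtain ⟨l, hl, hl2⟩ := h
      refine Or.inr (Set.mem_iUnion.2 ⟨l, ?_⟩)
      rw [if_pos hl]
      exact ⟨hx, hl2⟩
  have hstep : volume {x : unitInterval | 1/2 < g i x}
      ≤ volume (mainCell g i) + (k : ℕ) * ENNReal.ofReal η := by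
    calc volume {x : unitInterval | 1/2 < g i x}
        ≤ volume (mainCell g i ∪ ⋃ l : Fin k,
            (if l < i then {x : unitInterval | 1/2 < g i x ∧ 1/2 < g l x} else ∅)) :=
          measure_mono hsub
      _ ≤ volume (mainCell g i) + volume (⋃ l : Fin k,
            (if l < i then {x : unitInterval | 1/2 < g i x ∧ 1/2 < g l x} else ∅)) :=
          measure_union_le _ _
      _ ≤ volume (mainCell g i) + ∑ l : Fin k, volume
            (if l < i then {x : unitInterval | 1/2 < g i x ∧ 1/2 < g l x} else ∅) :=
          add_le_add_right (measure_iUnion_fintype_le _ _) _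
      _ ≤ volume (mainCell g i) + ∑ _l : Fin k, ENNReal.ofReal η := by
          refine add_le_add_right (Finset.sum_le_sum fun l _ => ?_) _
          split_ifs with hl
          · exact Epair hPm hPd hPu hg hW hU hη hη4 hLP (ne_of_gt hl)
          · simp
      _ = volume (mainCell g i) + (k : ℕ) * ENNReal.ofReal η := by
          rw [Finset.sum_const, Finset.card_univ, Fintype.card_fin, nsmul_eq_mul]
  calc volume (P i)
      ≤ volume {x : unitInterval | 1/2 < g i x} + ENNReal.ofReal η :=
        Ehalf_down hPm hPd hPu hg hW hU hη hη4 hLP i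
    _ ≤ volume (mainCell g i) + (k : ℕ) * ENNReal.ofReal η + ENNReal.ofReal η :=
        add_le_add_left hstep _
    _ ≤ volume (Pcell g i) + (k : ℕ) * ENNReal.ofReal η + ENNReal.ofReal η := by
        refine add_le_add_left (add_le_add_left (measure_mono ?_) _) _
        exact Set.subset_union_left
    _ = volume (Pcell g i) + (k + 1 : ℕ) * ENNReal.ofReal η := by
        push_cast
        ring

end Assembly
end Prf
namespace Prf
set_option linter.unusedSectionVars false
set_option maxHeartbeats 4000000

open Metric

variable {Ω₂ : Type*} [MeasurableSpace Ω₂] {P₂ : Measure Ω₂} [IsProbabilityMeasure P₂]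
variable {k : ℕ} {P : Fin k → Set unitInterval} {g : Fin k → unitInterval → ℝ}
variable {W U : unitInterval × unitInterval × Ω₂ → ℝ} {η : ℝ}

lemma fInd_level_le {c : ℝ} (hc0 : 0 < c) (hc1 : c ≤ 1) {i : Fin k} {x : unitInterval} :
    c ≤ fInd P i x ↔ x ∈ P i := by
  by_cases h : x ∈ P i
  · rw [fInd_mem h]; exact iff_of_true hc1 h
  · rw [fInd_not_mem h]; exact iff_of_false (by linarith) h

lemma fInd_level_lt {c : ℝ} (hc0 : 0 ≤ c) (hc1 : c < 1) {i : Fin k} {x : unitInterval} :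
    c < fInd P i x ↔ x ∈ P i := by
  by_cases h : x ∈ P i
  · rw [fInd_mem h]; exact iff_of_true hc1 h
  · rw [fInd_not_mem h]; exact iff_of_false (by linarith) h

section Beta

variable (hPm : ∀ i, MeasurableSet (P i)) (hPd : Pairwise (Function.onFun Disjoint P))
variable (hPu : (⋃ i, P i) = Set.univ)
variable (hg : ∀ i, Measurable (g i)) (hW : Measurable W) (hU : Measurable U)
variable (hη : 0 < η) (hη4 : η < 1/4)
variable (hLP : levyProkhorovEDist (Smeasure (volume : Measure unitInterval) P₂ (fInd P) W)
    (Smeasure (volume : Measure unitInterval) P₂ g U) < ENNReal.ofReal η)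

include hPm hPd hPu hg hW hU hη hη4 hLP

lemma nu_pairB {j l : Fin k} (hjl : j ≠ l) :
    Smeasure (volume : Measure unitInterval) P₂ g U
      {v : RE (2*k+1) | 1/2 < v (idxB j) ∧ 1/2 < v (idxB l)} ≤ ENNReal.ofReal η := by
  have hBm : MeasurableSet {v : RE (2*k+1) | 1/2 < v (idxB j) ∧ 1/2 < v (idxB l)} :=
    (measurableSet_lt measurable_const (measurable_apply_RE _)).inter
      (measurableSet_lt measurable_const (measurable_apply_RE _))
  rw [nu_apply hg hU hBm]
  have hpre : (sVec k g U) ⁻¹' {v : RE (2*k+1) | 1/2 < v (idxB j) ∧ 1/2 < v (idxB l)}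
      = {x : unitInterval × unitInterval × Ω₂ |
          x.2.1 ∈ {y : unitInterval | 1/2 < g j y ∧ 1/2 < g l y}} := by
    ext x; simp [Set.mem_preimage, sVec_idxB]
  rw [hpre, m_snd_apply _ (show MeasurableSet {y : unitInterval | 1/2 < g j y ∧ 1/2 < g l y} from
    (measurableSet_lt measurable_const (hg j)).inter (measurableSet_lt measurable_const (hg l)))]
  exact Epair hPm hPd hPu hg hW hU hη hη4 hLP hjl

lemma nu_pairA' {i l : Fin k} (hil : i ≠ l) :
    Smeasure (volume : Measure unitInterval) P₂ g U
      {v : RE (2*k+1) | 1/2 < v (idxA i) ∧ 1/2 < v (idxA l)} ≤ ENNReal.ofReal η := by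
  have hBm : MeasurableSet {v : RE (2*k+1) | 1/2 < v (idxA i) ∧ 1/2 < v (idxA l)} :=
    (measurableSet_lt measurable_const (measurable_apply_RE _)).inter
      (measurableSet_lt measurable_const (measurable_apply_RE _))
  rw [nu_apply hg hU hBm]
  have hpre : (sVec k g U) ⁻¹' {v : RE (2*k+1) | 1/2 < v (idxA i) ∧ 1/2 < v (idxA l)}
      = {x : unitInterval × unitInterval × Ω₂ |
          x.1 ∈ {y : unitInterval | 1/2 < g i y ∧ 1/2 < g l y}} := by
    ext x; simp [Set.mem_preimage, sVec_idxA]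
  rw [hpre, m_fst_apply _ (show MeasurableSet {y : unitInterval | 1/2 < g i y ∧ 1/2 < g l y} from
    (measurableSet_lt measurable_const (hg i)).inter (measurableSet_lt measurable_const (hg l)))]
  exact Epair hPm hPd hPu hg hW hU hη hη4 hLP hil

lemma extra_fst_le :
    (volume.prod (volume.prod P₂)) {x : unitInterval × unitInterval × Ω₂ | x.1 ∈ extraCell g}
      ≤ ENNReal.ofReal η := by
  rw [m_fst_apply _ (measurable_extraCell hg)]
  exact Eextra hPm hPd hPu hg hW hU hη hη4 hLP

lemma extra_snd_le :
    (volume.prod (volume.prod P₂)) {x : unitInterval × unitInterval × Ω₂ | x.2.1 ∈ extraCell g}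
      ≤ ENNReal.ofReal η := by
  rw [m_snd_apply _ (measurable_extraCell hg)]
  exact Eextra hPm hPd hPu hg hW hU hη hη4 hLP

lemma Ebeta (i j : Fin k) :
    levyProkhorovEDist (graphonInt (assocGraphon P₂ W) (P i ×ˢ P j))
      (graphonInt (assocGraphon P₂ U) (Pcell g i ×ˢ Pcell g j))
      ≤ ENNReal.ofReal ((2*k+3)*η) := by
  set M := graphonInt (assocGraphon P₂ W) (P i ×ˢ P j) with hM
  set N := graphonInt (assocGraphon P₂ U) (Pcell g i ×ˢ Pcell g j) with hN
  set μS := Smeasure (volume : Measure unitInterval) P₂ (fInd P) W with hmuS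
  set νS := Smeasure (volume : Measure unitInterval) P₂ g U with hnuS
  set mm := (volume.prod (volume.prod P₂) :
    Measure (unitInterval × unitInterval × Ω₂)) with hmm
  have hk1 : (1 : ℝ) ≤ 2*k+3 := by have := Nat.cast_nonneg (α := ℝ) k; linarith
  apply levyProkhorovEDist_le_of_forall
  intro ε B hδε hεtop hB
  have hδnn : (0:ℝ) ≤ (2*k+3)*η := by nlinarith
  have hηδ : ENNReal.ofReal η ≤ ENNReal.ofReal ((2*k+3)*η) := by
    apply ENNReal.ofReal_le_ofReal; nlinarith
  have hηε : ENNReal.ofReal η ≤ ε := le_trans hηδ hδε.le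
  have hηe : η ≤ ε.toReal := (ENNReal.ofReal_le_iff_le_toReal hεtop.ne).mp hηε
  have hthmono : thickening η B ⊆ thickening ε.toReal B := thickening_mono hηe B
  have hthB : MeasurableSet (thickening η B) := isOpen_thickening.measurableSet
  have hthB' : MeasurableSet (thickening ε.toReal B) := isOpen_thickening.measurableSet
  -- measurability of the coordinate sets used
  have hforall : ∀ (i0 : Fin k) (cv : Fin k → Fin (2*k+1)),
      MeasurableSet {v : RE (2*k+1) | ∀ l, l < i0 → v (cv l) ≤ 1/2} := by
    intro i0 cv
    have : {v : RE (2*k+1) | ∀ l, l < i0 → v (cv l) ≤ 1/2}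
        = ⋂ l : Fin k, {v : RE (2*k+1) | l < i0 → v (cv l) ≤ 1/2} := by ext v; simp
    rw [this]
    refine MeasurableSet.iInter fun l => ?_
    by_cases h : l < i0
    · have h2 : {v : RE (2*k+1) | l < i0 → v (cv l) ≤ 1/2}
          = {v : RE (2*k+1) | v (cv l) ≤ 1/2} := by ext v; simp [h]
      rw [h2]; exact measurableSet_le (measurable_apply_RE _) measurable_const
    · have h2 : {v : RE (2*k+1) | l < i0 → v (cv l) ≤ 1/2} = Set.univ := by ext v; simp [h]
      rw [h2]; exact MeasurableSet.univ
  constructor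
  · -- M B ≤ N (thickening ε B) + ε
    have hMB : M B = μS {v : RE (2*k+1) |
        3/4 ≤ v (idxA i) ∧ 3/4 ≤ v (idxB j) ∧ v idxW ∈ B} := by
      rw [hM, graphonInt_prod_apply P₂ hW (hPm i) (hPm j) hB, hmuS,
        mu_apply hPm hW (show MeasurableSet {v : RE (2*k+1) |
          3/4 ≤ v (idxA i) ∧ 3/4 ≤ v (idxB j) ∧ v idxW ∈ B} from
          (measurableSet_le measurable_const (measurable_apply_RE _)).inter
            ((measurableSet_le measurable_const (measurable_apply_RE _)).inter
              ((measurable_apply_RE _) hB)))]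
      congr 1
      ext x
      simp only [Set.mem_preimage, Set.mem_setOf_eq, sVec_idxA, sVec_idxB, sVec_idxW]
      exact (and_congr (fInd_level_le (by norm_num) (by norm_num))
        (and_congr (fInd_level_le (by norm_num) (by norm_num)) Iff.rfl)).symm
    have hstep2 : μS {v : RE (2*k+1) | 3/4 ≤ v (idxA i) ∧ 3/4 ≤ v (idxB j) ∧ v idxW ∈ B}
        ≤ νS (thickening η {v : RE (2*k+1) |
            3/4 ≤ v (idxA i) ∧ 3/4 ≤ v (idxB j) ∧ v idxW ∈ B}) + ENNReal.ofReal η := by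
      have h := left_measure_le_of_levyProkhorovEDist_lt hLP
        (show MeasurableSet {v : RE (2*k+1) |
          3/4 ≤ v (idxA i) ∧ 3/4 ≤ v (idxB j) ∧ v idxW ∈ B} from
          (measurableSet_le measurable_const (measurable_apply_RE _)).inter
            ((measurableSet_le measurable_const (measurable_apply_RE _)).inter
              ((measurable_apply_RE _) hB)))
      rwa [ENNReal.toReal_ofReal hη.le] at h
    have hstep3 : thickening η {v : RE (2*k+1) |
          3/4 ≤ v (idxA i) ∧ 3/4 ≤ v (idxB j) ∧ v idxW ∈ B}
        ⊆ {v : RE (2*k+1) | 1/2 < v (idxA i) ∧ 1/2 < v (idxB j) ∧ v idxW ∈ thickening η B} := by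
      refine thickening_subset_of_coord fun u v hv hl2 => ?_
      have h1 := abs_lt.1 (hl2 (idxA i))
      have h2 := abs_lt.1 (hl2 (idxB j))
      have hv1 : (3:ℝ)/4 ≤ v (idxA i) := hv.1
      have hv2 : (3:ℝ)/4 ≤ v (idxB j) := hv.2.1
      refine ⟨by linarith, by linarith, ?_⟩
      exact Metric.mem_thickening_iff.2 ⟨v idxW, hv.2.2, by rw [Real.dist_eq]; exact hl2 idxW⟩
    have hstep4 : {v : RE (2*k+1) | 1/2 < v (idxA i) ∧ 1/2 < v (idxB j) ∧
          v idxW ∈ thickening η B}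
        ⊆ ({v : RE (2*k+1) | (1/2 < v (idxA i) ∧ ∀ l, l < i → v (idxA l) ≤ 1/2) ∧
              (1/2 < v (idxB j) ∧ ∀ l, l < j → v (idxB l) ≤ 1/2) ∧
              v idxW ∈ thickening η B}
            ∪ ⋃ l : Fin k, (if l < i then
                {v : RE (2*k+1) | 1/2 < v (idxA i) ∧ 1/2 < v (idxA l)} else ∅))
            ∪ ⋃ l : Fin k, (if l < j then
                {v : RE (2*k+1) | 1/2 < v (idxB j) ∧ 1/2 < v (idxB l)} else ∅) := by
      intro v hv
      by_cases hA : ∀ l, l < i → v (idxA l) ≤ 1/2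
      · by_cases hB2 : ∀ l, l < j → v (idxB l) ≤ 1/2
        · exact Or.inl (Or.inl ⟨⟨hv.1, hA⟩, ⟨hv.2.1, hB2⟩, hv.2.2⟩)
        · push_neg at hB2
          obtain ⟨l, hl, hl2⟩ := hB2
          refine Or.inr (Set.mem_iUnion.2 ⟨l, ?_⟩)
          rw [if_pos hl]
          exact ⟨hv.2.1, hl2⟩
      · push_neg at hA
        obtain ⟨l, hl, hl2⟩ := hA
        refine Or.inl (Or.inr (Set.mem_iUnion.2 ⟨l, ?_⟩))
        rw [if_pos hl]
        exact ⟨hv.1, hl2⟩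
    have hGood : νS {v : RE (2*k+1) | (1/2 < v (idxA i) ∧ ∀ l, l < i → v (idxA l) ≤ 1/2) ∧
          (1/2 < v (idxB j) ∧ ∀ l, l < j → v (idxB l) ≤ 1/2) ∧ v idxW ∈ thickening η B}
        ≤ N (thickening ε.toReal B) := by
      have hGm : MeasurableSet {v : RE (2*k+1) |
          (1/2 < v (idxA i) ∧ ∀ l, l < i → v (idxA l) ≤ 1/2) ∧
          (1/2 < v (idxB j) ∧ ∀ l, l < j → v (idxB l) ≤ 1/2) ∧ v idxW ∈ thickening η B} := by
        refine ((measurableSet_lt measurable_const (measurable_apply_RE _)).inter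
          (hforall i (fun l => idxA l))).inter
          (((measurableSet_lt measurable_const (measurable_apply_RE _)).inter
            (hforall j (fun l => idxB l))).inter ((measurable_apply_RE _) hthB))
      rw [hnuS, nu_apply hg hU hGm]
      have hpre : (sVec k g U) ⁻¹' {v : RE (2*k+1) |
          (1/2 < v (idxA i) ∧ ∀ l, l < i → v (idxA l) ≤ 1/2) ∧
          (1/2 < v (idxB j) ∧ ∀ l, l < j → v (idxB l) ≤ 1/2) ∧ v idxW ∈ thickening η B}
          = {x : unitInterval × unitInterval × Ω₂ | x.1 ∈ mainCell g i ∧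
              x.2.1 ∈ mainCell g j ∧ U x ∈ thickening η B} := by
        ext x
        simp only [Set.mem_preimage, Set.mem_setOf_eq, sVec_idxA, sVec_idxB, sVec_idxW,
          mainCell]
      rw [hpre, hN, graphonInt_prod_apply P₂ hU (measurable_Pcell hg i) (measurable_Pcell hg j)
        hthB']
      apply measure_mono
      intro x hx
      exact ⟨Set.subset_union_left hx.1, Set.subset_union_left hx.2.1, hthmono hx.2.2⟩
    have hpairsA : νS (⋃ l : Fin k, (if l < i then
          {v : RE (2*k+1) | 1/2 < v (idxA i) ∧ 1/2 < v (idxA l)} else ∅))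
        ≤ (k : ℕ) * ENNReal.ofReal η := by
      calc νS (⋃ l : Fin k, _) ≤ ∑ l : Fin k, νS (if l < i then
            {v : RE (2*k+1) | 1/2 < v (idxA i) ∧ 1/2 < v (idxA l)} else ∅) :=
          measure_iUnion_fintype_le _ _
        _ ≤ ∑ _l : Fin k, ENNReal.ofReal η := by
            refine Finset.sum_le_sum fun l _ => ?_
            split_ifs with hl
            · exact nu_pairA' hPm hPd hPu hg hW hU hη hη4 hLP (ne_of_gt hl)
            · simp
        _ = (k : ℕ) * ENNReal.ofReal η := by
            rw [Finset.sum_const, Finset.card_univ, Fintype.card_fin, nsmul_eq_mul]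
    have hpairsB : νS (⋃ l : Fin k, (if l < j then
          {v : RE (2*k+1) | 1/2 < v (idxB j) ∧ 1/2 < v (idxB l)} else ∅))
        ≤ (k : ℕ) * ENNReal.ofReal η := by
      calc νS (⋃ l : Fin k, _) ≤ ∑ l : Fin k, νS (if l < j then
            {v : RE (2*k+1) | 1/2 < v (idxB j) ∧ 1/2 < v (idxB l)} else ∅) :=
          measure_iUnion_fintype_le _ _
        _ ≤ ∑ _l : Fin k, ENNReal.ofReal η := by
            refine Finset.sum_le_sum fun l _ => ?_
            split_ifs with hl
            · exact nu_pairB hPm hPd hPu hg hW hU hη hη4 hLP (ne_of_gt hl)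
            · simp
        _ = (k : ℕ) * ENNReal.ofReal η := by
            rw [Finset.sum_const, Finset.card_univ, Fintype.card_fin, nsmul_eq_mul]
    calc M B ≤ νS (thickening η {v : RE (2*k+1) |
            3/4 ≤ v (idxA i) ∧ 3/4 ≤ v (idxB j) ∧ v idxW ∈ B}) + ENNReal.ofReal η := by
          rw [hMB]; exact hstep2
      _ ≤ νS ((({v : RE (2*k+1) | (1/2 < v (idxA i) ∧ ∀ l, l < i → v (idxA l) ≤ 1/2) ∧
              (1/2 < v (idxB j) ∧ ∀ l, l < j → v (idxB l) ≤ 1/2) ∧ v idxW ∈ thickening η B}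
            ∪ ⋃ l : Fin k, (if l < i then
                {v : RE (2*k+1) | 1/2 < v (idxA i) ∧ 1/2 < v (idxA l)} else ∅))
            ∪ ⋃ l : Fin k, (if l < j then
                {v : RE (2*k+1) | 1/2 < v (idxB j) ∧ 1/2 < v (idxB l)} else ∅)))
            + ENNReal.ofReal η :=
          add_le_add_left (measure_mono (le_trans hstep3 hstep4)) _
      _ ≤ (νS {v : RE (2*k+1) | (1/2 < v (idxA i) ∧ ∀ l, l < i → v (idxA l) ≤ 1/2) ∧
              (1/2 < v (idxB j) ∧ ∀ l, l < j → v (idxB l) ≤ 1/2) ∧ v idxW ∈ thickening η B}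
            + νS (⋃ l : Fin k, (if l < i then
                {v : RE (2*k+1) | 1/2 < v (idxA i) ∧ 1/2 < v (idxA l)} else ∅))
            + νS (⋃ l : Fin k, (if l < j then
                {v : RE (2*k+1) | 1/2 < v (idxB j) ∧ 1/2 < v (idxB l)} else ∅)))
            + ENNReal.ofReal η := by
          refine add_le_add_left (le_trans (measure_union_le _ _) ?_) _
          exact add_le_add_left (measure_union_le _ _) _
      _ ≤ (N (thickening ε.toReal B) + (k : ℕ) * ENNReal.ofReal η
            + (k : ℕ) * ENNReal.ofReal η) + ENNReal.ofReal η :=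
          add_le_add_left (add_le_add (add_le_add hGood hpairsA) hpairsB) _
      _ ≤ N (thickening ε.toReal B) + ε := by
          rw [add_assoc, add_assoc, ← add_assoc ((k : ℕ) * ENNReal.ofReal η)]
          refine add_le_add_right ?_ _
          have : (k : ℕ) * ENNReal.ofReal η + (k : ℕ) * ENNReal.ofReal η + ENNReal.ofReal η
              = ((2 * k + 1 : ℕ) : ℝ≥0∞) * ENNReal.ofReal η := by push_cast; ring
          rw [this]
          refine le_trans ?_ hδε.le
          rw [show ((2 * k + 1 : ℕ) : ℝ≥0∞) = ENNReal.ofReal ((2 * k + 1 : ℕ) : ℝ) from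
            (ENNReal.ofReal_natCast _).symm, ← ENNReal.ofReal_mul (by positivity)]
          apply ENNReal.ofReal_le_ofReal
          push_cast
          nlinarith
  · -- N B ≤ M (thickening ε B) + ε
    have hNsplit : N B ≤ νS {v : RE (2*k+1) |
          (1/2 < v (idxA i) ∧ ∀ l, l < i → v (idxA l) ≤ 1/2) ∧
          (1/2 < v (idxB j) ∧ ∀ l, l < j → v (idxB l) ≤ 1/2) ∧ v idxW ∈ B}
        + 2 * ENNReal.ofReal η := by
      rw [hN, graphonInt_prod_apply P₂ hU (measurable_Pcell hg i) (measurable_Pcell hg j) hB]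
      have hsub : {x : unitInterval × unitInterval × Ω₂ |
            x.1 ∈ Pcell g i ∧ x.2.1 ∈ Pcell g j ∧ U x ∈ B}
          ⊆ ({x : unitInterval × unitInterval × Ω₂ |
              x.1 ∈ mainCell g i ∧ x.2.1 ∈ mainCell g j ∧ U x ∈ B}
            ∪ {x : unitInterval × unitInterval × Ω₂ | x.1 ∈ extraCell g})
            ∪ {x : unitInterval × unitInterval × Ω₂ | x.2.1 ∈ extraCell g} := by
        rintro x ⟨hx1, hx2, hx3⟩
        rcases hx1 with hx1 | hx1
        · rcases hx2 with hx2 | hx2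
          · exact Or.inl (Or.inl ⟨hx1, hx2, hx3⟩)
          · exact Or.inr (mem_extra_elim hx2)
        · exact Or.inl (Or.inr (mem_extra_elim hx1))
      have hGm : MeasurableSet {v : RE (2*k+1) |
          (1/2 < v (idxA i) ∧ ∀ l, l < i → v (idxA l) ≤ 1/2) ∧
          (1/2 < v (idxB j) ∧ ∀ l, l < j → v (idxB l) ≤ 1/2) ∧ v idxW ∈ B} :=
        ((measurableSet_lt measurable_const (measurable_apply_RE _)).inter
          (hforall i (fun l => idxA l))).inter
          (((measurableSet_lt measurable_const (measurable_apply_RE _)).inter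
            (hforall j (fun l => idxB l))).inter ((measurable_apply_RE _) hB))
      have hGeq : νS {v : RE (2*k+1) |
          (1/2 < v (idxA i) ∧ ∀ l, l < i → v (idxA l) ≤ 1/2) ∧
          (1/2 < v (idxB j) ∧ ∀ l, l < j → v (idxB l) ≤ 1/2) ∧ v idxW ∈ B}
          = mm {x : unitInterval × unitInterval × Ω₂ |
              x.1 ∈ mainCell g i ∧ x.2.1 ∈ mainCell g j ∧ U x ∈ B} := by
        rw [hnuS, nu_apply hg hU hGm]
        congr 1
        ext x
        simp only [Set.mem_preimage, Set.mem_setOf_eq, sVec_idxA, sVec_idxB, sVec_idxW, mainCell]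
      calc mm {x : unitInterval × unitInterval × Ω₂ |
            x.1 ∈ Pcell g i ∧ x.2.1 ∈ Pcell g j ∧ U x ∈ B}
          ≤ mm (({x : unitInterval × unitInterval × Ω₂ |
              x.1 ∈ mainCell g i ∧ x.2.1 ∈ mainCell g j ∧ U x ∈ B}
            ∪ {x : unitInterval × unitInterval × Ω₂ | x.1 ∈ extraCell g})
            ∪ {x : unitInterval × unitInterval × Ω₂ | x.2.1 ∈ extraCell g}) :=
            measure_mono hsub
        _ ≤ mm ({x : unitInterval × unitInterval × Ω₂ |
              x.1 ∈ mainCell g i ∧ x.2.1 ∈ mainCell g j ∧ U x ∈ B}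
            ∪ {x : unitInterval × unitInterval × Ω₂ | x.1 ∈ extraCell g})
            + mm {x : unitInterval × unitInterval × Ω₂ | x.2.1 ∈ extraCell g} :=
            measure_union_le _ _
        _ ≤ mm {x : unitInterval × unitInterval × Ω₂ |
              x.1 ∈ mainCell g i ∧ x.2.1 ∈ mainCell g j ∧ U x ∈ B}
            + mm {x : unitInterval × unitInterval × Ω₂ | x.1 ∈ extraCell g}
            + mm {x : unitInterval × unitInterval × Ω₂ | x.2.1 ∈ extraCell g} :=
            add_le_add_left (measure_union_le _ _) _
        _ ≤ mm {x : unitInterval × unitInterval × Ω₂ |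
              x.1 ∈ mainCell g i ∧ x.2.1 ∈ mainCell g j ∧ U x ∈ B}
            + ENNReal.ofReal η + ENNReal.ofReal η :=
            add_le_add (add_le_add_right (extra_fst_le hPm hPd hPu hg hW hU hη hη4 hLP) _)
              (extra_snd_le hPm hPd hPu hg hW hU hη hη4 hLP)
        _ = νS {v : RE (2*k+1) |
            (1/2 < v (idxA i) ∧ ∀ l, l < i → v (idxA l) ≤ 1/2) ∧
            (1/2 < v (idxB j) ∧ ∀ l, l < j → v (idxB l) ≤ 1/2) ∧ v idxW ∈ B}
            + 2 * ENNReal.ofReal η := by rw [hGeq]; ring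
    have hGm : MeasurableSet {v : RE (2*k+1) |
        (1/2 < v (idxA i) ∧ ∀ l, l < i → v (idxA l) ≤ 1/2) ∧
        (1/2 < v (idxB j) ∧ ∀ l, l < j → v (idxB l) ≤ 1/2) ∧ v idxW ∈ B} :=
      ((measurableSet_lt measurable_const (measurable_apply_RE _)).inter
        (hforall i (fun l => idxA l))).inter
        (((measurableSet_lt measurable_const (measurable_apply_RE _)).inter
          (hforall j (fun l => idxB l))).inter ((measurable_apply_RE _) hB))
    have hstep2 : νS {v : RE (2*k+1) |
        (1/2 < v (idxA i) ∧ ∀ l, l < i → v (idxA l) ≤ 1/2) ∧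
        (1/2 < v (idxB j) ∧ ∀ l, l < j → v (idxB l) ≤ 1/2) ∧ v idxW ∈ B}
        ≤ μS (thickening η {v : RE (2*k+1) |
          (1/2 < v (idxA i) ∧ ∀ l, l < i → v (idxA l) ≤ 1/2) ∧
          (1/2 < v (idxB j) ∧ ∀ l, l < j → v (idxB l) ≤ 1/2) ∧ v idxW ∈ B})
          + ENNReal.ofReal η := by
      have h := right_measure_le_of_levyProkhorovEDist_lt hLP hGm
      rwa [ENNReal.toReal_ofReal hη.le] at h
    have hstep3 : thickening η {v : RE (2*k+1) |
          (1/2 < v (idxA i) ∧ ∀ l, l < i → v (idxA l) ≤ 1/2) ∧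
          (1/2 < v (idxB j) ∧ ∀ l, l < j → v (idxB l) ≤ 1/2) ∧ v idxW ∈ B}
        ⊆ {v : RE (2*k+1) | 1/2 - η < v (idxA i) ∧ 1/2 - η < v (idxB j) ∧
            v idxW ∈ thickening η B} := by
      refine thickening_subset_of_coord fun u v hv hl2 => ?_
      have h1 := abs_lt.1 (hl2 (idxA i))
      have h2 := abs_lt.1 (hl2 (idxB j))
      obtain ⟨⟨hv1, -⟩, ⟨hv2, -⟩, hv3⟩ := hv
      refine ⟨by linarith, by linarith, ?_⟩
      exact Metric.mem_thickening_iff.2 ⟨v idxW, hv3, by rw [Real.dist_eq]; exact hl2 idxW⟩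
    have hstep4 : μS {v : RE (2*k+1) | 1/2 - η < v (idxA i) ∧ 1/2 - η < v (idxB j) ∧
          v idxW ∈ thickening η B} = M (thickening η B) := by
      rw [hM, graphonInt_prod_apply P₂ hW (hPm i) (hPm j) hthB, hmuS,
        mu_apply hPm hW (show MeasurableSet {v : RE (2*k+1) |
          1/2 - η < v (idxA i) ∧ 1/2 - η < v (idxB j) ∧ v idxW ∈ thickening η B} from
          (measurableSet_lt measurable_const (measurable_apply_RE _)).inter
            ((measurableSet_lt measurable_const (measurable_apply_RE _)).inter
              ((measurable_apply_RE _) hthB)))]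
      congr 1
      ext x
      simp only [Set.mem_preimage, Set.mem_setOf_eq, sVec_idxA, sVec_idxB, sVec_idxW]
      exact (and_congr (fInd_level_lt (by linarith) (by linarith))
        (and_congr (fInd_level_lt (by linarith) (by linarith)) Iff.rfl))
    calc N B ≤ νS {v : RE (2*k+1) |
          (1/2 < v (idxA i) ∧ ∀ l, l < i → v (idxA l) ≤ 1/2) ∧
          (1/2 < v (idxB j) ∧ ∀ l, l < j → v (idxB l) ≤ 1/2) ∧ v idxW ∈ B}
          + 2 * ENNReal.ofReal η := hNsplit
      _ ≤ (μS (thickening η {v : RE (2*k+1) |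
            (1/2 < v (idxA i) ∧ ∀ l, l < i → v (idxA l) ≤ 1/2) ∧
            (1/2 < v (idxB j) ∧ ∀ l, l < j → v (idxB l) ≤ 1/2) ∧ v idxW ∈ B})
            + ENNReal.ofReal η) + 2 * ENNReal.ofReal η := add_le_add_left hstep2 _
      _ ≤ (μS {v : RE (2*k+1) | 1/2 - η < v (idxA i) ∧ 1/2 - η < v (idxB j) ∧
            v idxW ∈ thickening η B} + ENNReal.ofReal η) + 2 * ENNReal.ofReal η := by
          exact add_le_add_left (add_le_add_left (measure_mono hstep3) _) _
      _ = M (thickening η B) + 3 * ENNReal.ofReal η := by rw [hstep4]; ring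
      _ ≤ M (thickening ε.toReal B) + ε := by
          refine add_le_add (measure_mono hthmono) ?_
          refine le_trans ?_ hδε.le
          rw [show (3 : ℝ≥0∞) = ENNReal.ofReal (3:ℝ) by simp, ← ENNReal.ofReal_mul (by norm_num)]
          apply ENNReal.ofReal_le_ofReal
          nlinarith

end Beta
end Prf
namespace Prf
set_option linter.unusedSectionVars false
set_option maxHeartbeats 2000000

open Metric

lemma smul_quotientOf (K : unitInterval × unitInterval → Measure ℝ) {k : ℕ}
    (Pa : Fin k → Set unitInterval) (i j : Fin k) :
    ENNReal.ofReal ((quotientOf K Pa).1 i * (quotientOf K Pa).1 j) • (quotientOf K Pa).2 i j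
      = graphonInt K (Pa i ×ˢ Pa j) := by
  have hi : volume (Pa i) ≠ ∞ := measure_ne_top _ _
  have hj : volume (Pa j) ≠ ∞ := measure_ne_top _ _
  by_cases h : 0 < volume (Pa i) * volume (Pa j)
  · simp only [quotientOf, if_pos h]
    rw [← ENNReal.toReal_mul, ENNReal.ofReal_toReal (ENNReal.mul_ne_top hi hj), smul_smul,
      ENNReal.mul_inv_cancel (ne_of_gt h) (ENNReal.mul_ne_top hi hj), one_smul]
  · simp only [quotientOf, if_neg h]
    rw [smul_zero]
    have h0 : ((volume : Measure unitInterval).prod volume) (Pa i ×ˢ Pa j) = 0 := by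
      rw [Measure.prod_prod]
      exact le_zero_iff.mp (not_lt.mp h)
    rw [graphonInt, Measure.restrict_eq_zero.mpr h0, Measure.bind_zero_left]

lemma d1_comm {k : ℕ} (q q' : (Fin k → ℝ) × (Fin k → Fin k → Measure ℝ)) :
    d1 q q' = d1 q' q := by
  unfold d1
  congr 1
  · exact Finset.sum_congr rfl fun i _ => abs_sub_comm _ _
  · exact Finset.sum_congr rfl fun i _ => Finset.sum_congr rfl fun j _ =>
      levyProkhorovDist_comm _ _

variable {Ω₂ : Type*} [MeasurableSpace Ω₂] {P₂ : Measure Ω₂} [IsProbabilityMeasure P₂]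
variable {k : ℕ} {P : Fin k → Set unitInterval} {g : Fin k → unitInterval → ℝ}
variable {W U : unitInterval × unitInterval × Ω₂ → ℝ} {η : ℝ}

section Core

variable (hPm : ∀ i, MeasurableSet (P i)) (hPd : Pairwise (Function.onFun Disjoint P))
variable (hPu : (⋃ i, P i) = Set.univ)
variable (hg : ∀ i, Measurable (g i)) (hW : Measurable W) (hU : Measurable U)
variable (hη : 0 < η) (hη4 : η < 1/4)
variable (hLP : levyProkhorovEDist (Smeasure (volume : Measure unitInterval) P₂ (fInd P) W)
    (Smeasure (volume : Measure unitInterval) P₂ g U) < ENNReal.ofReal η)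

include hPm hPd hPu hg hW hU hη hη4 hLP

lemma toReal_le_add_aux {x y : ℝ≥0∞} {c : ℝ} (hx : x ≤ y + ENNReal.ofReal c) (hy : y ≠ ∞)
    (hc : 0 ≤ c) : x.toReal ≤ y.toReal + c := by
  calc x.toReal ≤ (y + ENNReal.ofReal c).toReal :=
      ENNReal.toReal_mono (ENNReal.add_ne_top.mpr ⟨hy, ENNReal.ofReal_ne_top⟩) hx
    _ = y.toReal + c := by rw [ENNReal.toReal_add hy ENNReal.ofReal_ne_top,
        ENNReal.toReal_ofReal hc]

lemma alpha_abs (hk : 0 < k) (i : Fin k) :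
    |(volume (P i)).toReal - (volume (Pcell g i)).toReal| ≤ (k+1)*η := by
  have hk1 : (1:ℝ) ≤ k := by exact_mod_cast hk
  have h1 : (volume (Pcell g i)).toReal ≤ (volume (P i)).toReal + 2*η := by
    refine toReal_le_add_aux hPm hPd hPu hg hW hU hη hη4 hLP ?_ (measure_ne_top _ _)
      (by linarith)
    have := alpha_up hPm hPd hPu hg hW hU hη hη4 hLP i
    rwa [show (2 : ℝ≥0∞) * ENNReal.ofReal η = ENNReal.ofReal (2*η) by
      rw [ENNReal.ofReal_mul (by norm_num)]; norm_num] at this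
  have h2 : (volume (P i)).toReal ≤ (volume (Pcell g i)).toReal + (k+1)*η := by
    refine toReal_le_add_aux hPm hPd hPu hg hW hU hη hη4 hLP ?_ (measure_ne_top _ _)
      (by positivity)
    have := alpha_down hPm hPd hPu hg hW hU hη hη4 hLP i
    rwa [show ((k + 1 : ℕ) : ℝ≥0∞) * ENNReal.ofReal η = ENNReal.ofReal ((k+1)*η) by
      rw [show ((k + 1 : ℕ) : ℝ≥0∞) = ENNReal.ofReal ((k : ℝ)+1) by
        rw [← ENNReal.ofReal_natCast]; norm_num,
        ← ENNReal.ofReal_mul (by positivity)]] at this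
  rw [abs_sub_le_iff]
  constructor
  · linarith
  · nlinarith

lemma beta_dist (i j : Fin k) :
    levyProkhorovDist (graphonInt (assocGraphon P₂ W) (P i ×ˢ P j))
      (graphonInt (assocGraphon P₂ U) (Pcell g i ×ˢ Pcell g j)) ≤ (2*k+3)*η := by
  refine ENNReal.toReal_le_of_le_ofReal (by positivity) ?_
  exact Ebeta hPm hPd hPu hg hW hU hη hη4 hLP i j

lemma core_d1 (hk : 0 < k) :
    d1 (quotientOf (assocGraphon P₂ W) P) (quotientOf (assocGraphon P₂ U) (Pcell g))
      ≤ ((k*(k+1) : ℝ) + k^2*(2*k+3)) * η := by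
  unfold d1
  have hfst : ∀ i : Fin k, (quotientOf (assocGraphon P₂ W) P).1 i
      = (volume (P i)).toReal := fun i => rfl
  have hsnd : ∀ i : Fin k, (quotientOf (assocGraphon P₂ U) (Pcell g)).1 i
      = (volume (Pcell g i)).toReal := fun i => rfl
  have hterm1 : ∑ i : Fin k, |(quotientOf (assocGraphon P₂ W) P).1 i
        - (quotientOf (assocGraphon P₂ U) (Pcell g)).1 i| ≤ (k*(k+1) : ℝ) * η := by
    calc ∑ i : Fin k, |(quotientOf (assocGraphon P₂ W) P).1 i
          - (quotientOf (assocGraphon P₂ U) (Pcell g)).1 i|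
        ≤ ∑ _i : Fin k, (k+1)*η := by
          refine Finset.sum_le_sum fun i _ => ?_
          rw [hfst, hsnd]
          exact alpha_abs hPm hPd hPu hg hW hU hη hη4 hLP hk i
      _ = (k*(k+1) : ℝ) * η := by
          rw [Finset.sum_const, Finset.card_univ, Fintype.card_fin, nsmul_eq_mul]
          ring
  have hterm2 : ∑ i : Fin k, ∑ j : Fin k, levyProkhorovDist
        (ENNReal.ofReal ((quotientOf (assocGraphon P₂ W) P).1 i
          * (quotientOf (assocGraphon P₂ W) P).1 j) • (quotientOf (assocGraphon P₂ W) P).2 i j)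
        (ENNReal.ofReal ((quotientOf (assocGraphon P₂ U) (Pcell g)).1 i
          * (quotientOf (assocGraphon P₂ U) (Pcell g)).1 j)
          • (quotientOf (assocGraphon P₂ U) (Pcell g)).2 i j)
      ≤ (k^2*(2*k+3) : ℝ) * η := by
    calc ∑ i : Fin k, ∑ j : Fin k, levyProkhorovDist
          (ENNReal.ofReal ((quotientOf (assocGraphon P₂ W) P).1 i
            * (quotientOf (assocGraphon P₂ W) P).1 j) • (quotientOf (assocGraphon P₂ W) P).2 i j)
          (ENNReal.ofReal ((quotientOf (assocGraphon P₂ U) (Pcell g)).1 i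
            * (quotientOf (assocGraphon P₂ U) (Pcell g)).1 j)
            • (quotientOf (assocGraphon P₂ U) (Pcell g)).2 i j)
        ≤ ∑ _i : Fin k, ∑ _j : Fin k, (2*k+3)*η := by
          refine Finset.sum_le_sum fun i _ => Finset.sum_le_sum fun j _ => ?_
          rw [smul_quotientOf, smul_quotientOf]
          exact beta_dist hPm hPd hPu hg hW hU hη hη4 hLP i j
      _ = (k^2*(2*k+3) : ℝ) * η := by
          simp only [Finset.sum_const, Finset.card_univ, Fintype.card_fin, nsmul_eq_mul]
          ring
  calc _ ≤ (k*(k+1) : ℝ) * η + (k^2*(2*k+3) : ℝ) * η := add_le_add hterm1 hterm2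
    _ = ((k*(k+1) : ℝ) + k^2*(2*k+3)) * η := by ring

end Core

/-- Transfer a quotient of W's graphon to one of U's graphon, given profile closeness. -/
lemma quotient_transfer {Ω₂ : Type*} [MeasurableSpace Ω₂] {P₂ : Measure Ω₂}
    [IsProbabilityMeasure P₂] {k : ℕ} (hk : 0 < k)
    {W U : unitInterval × unitInterval × Ω₂ → ℝ} (hW : Measurable W) (hU : Measurable U)
    {η : ℝ} (hη : 0 < η) (hη4 : η < 1/4)
    (hprof : ∀ P : Fin k → Set unitInterval, (∀ i, MeasurableSet (P i)) →
      Pairwise (Function.onFun Disjoint P) → (⋃ i, P i) = Set.univ →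
      ∃ g : Fin k → unitInterval → ℝ, (∀ i, Measurable (g i)) ∧
        levyProkhorovEDist (Smeasure (volume : Measure unitInterval) P₂ (fInd P) W)
          (Smeasure (volume : Measure unitInterval) P₂ g U) < ENNReal.ofReal η) :
    ∀ R ∈ Qk (assocGraphon P₂ W) k, ∃ R' ∈ Qk (assocGraphon P₂ U) k,
      d1 R R' ≤ ((k*(k+1) : ℝ) + k^2*(2*k+3)) * η := by
  rintro R ⟨P, hPm, hPd, hPu, rfl⟩
  obtain ⟨g, hg, hLP⟩ := hprof P hPm hPd hPu
  refine ⟨quotientOf (assocGraphon P₂ U) (Pcell g), ?_, ?_⟩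
  · exact ⟨Pcell g, measurable_Pcell hg, pairwise_Pcell g, iUnion_Pcell hk g, rfl⟩
  · exact core_d1 hPm hPd hPu hg hW hU hη hη4 hLP hk

end Prf
namespace Prf
set_option linter.unusedSectionVars false
set_option maxHeartbeats 2000000

lemma Sk_prob {V : PVar} {k : ℕ} {μ : Measure (RE (2*k+1))} (hμ : μ ∈ V.Sk k) :
    IsProbabilityMeasure μ := by
  have := V.prob₁
  have := V.prob₂
  obtain ⟨f, hf, _hIcc, rfl⟩ := hμ
  exact Measure.isProbabilityMeasure_map (measurable_sVec hf V.meas).aemeasurable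

lemma Sk_nonempty (V : PVar) (k : ℕ) : (V.Sk k).Nonempty := by
  refine ⟨Smeasure V.P₁ V.P₂ (fun _ _ => 0) V.W, fun _ _ => 0, fun i => measurable_const,
    fun i x => ?_, rfl⟩
  exact Set.mem_Icc.mpr ⟨by norm_num, by norm_num⟩

lemma eHausLP_Sk_le_one (V V' : PVar) (k : ℕ) : eHausLP (V.Sk k) (V'.Sk k) ≤ 1 := by
  have hbound : ∀ (μ ν : Measure (RE (2*k+1))), μ ∈ V.Sk k → ν ∈ V'.Sk k →
      levyProkhorovEDist μ ν ≤ 1 := by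
    intro μ ν hμ hν
    have h1 : IsProbabilityMeasure μ := Sk_prob hμ
    have h2 : IsProbabilityMeasure ν := Sk_prob hν
    refine le_trans (levyProkhorovEDist_le_max_measure_univ μ ν) ?_
    rw [h1.measure_univ, h2.measure_univ, max_self]
  obtain ⟨ν₀, hν₀⟩ := Sk_nonempty V' k
  obtain ⟨μ₀, hμ₀⟩ := Sk_nonempty V k
  refine max_le (iSup₂_le fun μ hμ => ?_) (iSup₂_le fun ν hν => ?_)
  · exact le_trans (iInf₂_le ν₀ hν₀) (hbound μ ν₀ hμ hν₀)
  · exact le_trans (iInf₂_le μ₀ hμ₀) (hbound μ₀ ν hμ₀ hν)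

lemma dHLP_Sk_le_one (V V' : PVar) (k : ℕ) : dHLP (V.Sk k) (V'.Sk k) ≤ 1 := by
  rw [dHLP]
  refine le_trans (ENNReal.toReal_mono (by simp) (eHausLP_Sk_le_one V V' k)) (by simp)

lemma eHausLP_Sk_ne_top (V V' : PVar) (k : ℕ) : eHausLP (V.Sk k) (V'.Sk k) ≠ ∞ :=
  (lt_of_le_of_lt (eHausLP_Sk_le_one V V' k) ENNReal.one_lt_top).ne

lemma dM_term_le {V V' : PVar} {δ : ℝ} (hδ : dM V V' ≤ δ) (k' : ℕ) :
    dHLP (V.Sk (k'+1)) (V'.Sk (k'+1)) ≤ 2^(k'+1) * δ := by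
  have hnn : ∀ n : ℕ, 0 ≤ (2:ℝ)⁻¹ ^ (n+1) * dHLP (V.Sk (n+1)) (V'.Sk (n+1)) := fun n =>
    mul_nonneg (by positivity) ENNReal.toReal_nonneg
  have hsum : Summable (fun n : ℕ => (2:ℝ)⁻¹ ^ (n+1) * dHLP (V.Sk (n+1)) (V'.Sk (n+1))) := by
    refine Summable.of_nonneg_of_le hnn (fun n => ?_)
      (((summable_geometric_of_lt_one (by norm_num) (by norm_num : (2:ℝ)⁻¹ < 1))).mul_right 2⁻¹)
    calc (2:ℝ)⁻¹ ^ (n+1) * dHLP (V.Sk (n+1)) (V'.Sk (n+1))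
        ≤ (2:ℝ)⁻¹ ^ (n+1) * 1 := by
          refine mul_le_mul_of_nonneg_left (dHLP_Sk_le_one V V' (n+1)) (by positivity)
      _ = (2:ℝ)⁻¹ ^ n * 2⁻¹ := by rw [mul_one, pow_succ]
  have hterm : (2:ℝ)⁻¹ ^ (k'+1) * dHLP (V.Sk (k'+1)) (V'.Sk (k'+1)) ≤ δ :=
    le_trans (Summable.le_tsum hsum k' fun n _ => hnn n) hδ
  have h2 : (0:ℝ) < (2:ℝ)⁻¹ ^ (k'+1) := by positivity
  calc dHLP (V.Sk (k'+1)) (V'.Sk (k'+1))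
      = (2:ℝ)^(k'+1) * ((2:ℝ)⁻¹ ^ (k'+1) * dHLP (V.Sk (k'+1)) (V'.Sk (k'+1))) := by
        rw [← mul_assoc, ← mul_pow]
        norm_num
    _ ≤ (2:ℝ)^(k'+1) * δ := by
        refine mul_le_mul_of_nonneg_left hterm (by positivity)

lemma exists_close_right {X : Type*} [MeasurableSpace X] [PseudoEMetricSpace X]
    {A B : Set (Measure X)} {c : ℝ≥0∞} (h : eHausLP A B < c) {μ : Measure X} (hμ : μ ∈ A) :
    ∃ ν ∈ B, levyProkhorovEDist μ ν < c := by
  have h1 : (⨅ ν ∈ B, levyProkhorovEDist μ ν) < c := by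
    refine lt_of_le_of_lt ?_ h
    refine le_trans ?_ (le_max_left _ _)
    exact le_iSup₂ (f := fun (μ : Measure X) (_ : μ ∈ A) => ⨅ ν ∈ B, levyProkhorovEDist μ ν) μ hμ
  obtain ⟨ν, hν⟩ := iInf_lt_iff.mp h1
  obtain ⟨hνB, hlt⟩ := iInf_lt_iff.mp hν
  exact ⟨ν, hνB, hlt⟩

lemma exists_close_left {X : Type*} [MeasurableSpace X] [PseudoEMetricSpace X]
    {A B : Set (Measure X)} {c : ℝ≥0∞} (h : eHausLP A B < c) {ν : Measure X} (hν : ν ∈ B) :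
    ∃ μ ∈ A, levyProkhorovEDist μ ν < c := by
  have h1 : (⨅ μ ∈ A, levyProkhorovEDist μ ν) < c := by
    refine lt_of_le_of_lt ?_ h
    refine le_trans ?_ (le_max_right _ _)
    exact le_iSup₂ (f := fun (ν : Measure X) (_ : ν ∈ B) => ⨅ μ ∈ A, levyProkhorovEDist μ ν) ν hν
  obtain ⟨μ, hμ⟩ := iInf_lt_iff.mp h1
  obtain ⟨hμA, hlt⟩ := iInf_lt_iff.mp hμ
  exact ⟨μ, hμA, hlt⟩

lemma d1H_le {k : ℕ} {A B : Set ((Fin k → ℝ) × (Fin k → Fin k → Measure ℝ))} {ε : ℝ}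
    (hε : 0 ≤ ε) (h1 : ∀ q ∈ A, ∃ q' ∈ B, d1 q q' ≤ ε)
    (h2 : ∀ q' ∈ B, ∃ q ∈ A, d1 q q' ≤ ε) : d1H A B ≤ ε := by
  rw [d1H]
  refine ENNReal.toReal_le_of_le_ofReal hε (max_le ?_ ?_)
  · refine iSup₂_le fun q hq => ?_
    obtain ⟨q', hq', hd⟩ := h1 q hq
    exact le_trans (iInf₂_le q' hq') (ENNReal.ofReal_le_ofReal hd)
  · refine iSup₂_le fun q' hq' => ?_
    obtain ⟨q, hq, hd⟩ := h2 q' hq'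
    exact le_trans (iInf₂_le q hq) (ENNReal.ofReal_le_ofReal hd)

end Prf
namespace Prf
set_option linter.unusedSectionVars false
set_option maxHeartbeats 2000000

lemma main_part1 {Ω₂ : Type*} [MeasurableSpace Ω₂] (P₂ : Measure Ω₂) [IsProbabilityMeasure P₂]
    (U W : unitInterval × unitInterval × Ω₂ → ℝ) (hU : Measurable U) (hW : Measurable W)
    {k : ℕ} (hk : 0 < k) {η : ℝ} (hη : 0 < η) (hη4 : η < 1/4)
    (hδ : dM (PVar.ofUnitInterval P₂ U hU) (PVar.ofUnitInterval P₂ W hW) ≤ η / 2^(k+1)) :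
    (∀ R ∈ Qk (assocGraphon P₂ W) k, ∃ R' ∈ Qk (assocGraphon P₂ U) k,
        d1 R R' ≤ ((k*(k+1) : ℝ) + k^2*(2*k+3)) * η) ∧
    (∀ R ∈ Qk (assocGraphon P₂ U) k, ∃ R' ∈ Qk (assocGraphon P₂ W) k,
        d1 R R' ≤ ((k*(k+1) : ℝ) + k^2*(2*k+3)) * η) := by
  obtain ⟨k', rfl⟩ := Nat.exists_eq_succ_of_ne_zero hk.ne'
  set VU := PVar.ofUnitInterval P₂ U hU with hVU
  set VW := PVar.ofUnitInterval P₂ W hW with hVW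
  have hd : dHLP (VU.Sk (k'+1)) (VW.Sk (k'+1)) ≤ η / 2 := by
    have h1 := dM_term_le hδ k'
    have h2 : (2:ℝ)^(k'+1) * (η / 2^(k'+1+1)) = η / 2 := by
      rw [pow_succ]
      field_simp
      ring
    rw [h2] at h1
    exact h1
  have heH : eHausLP (VU.Sk (k'+1)) (VW.Sk (k'+1)) < ENNReal.ofReal η := by
    calc eHausLP (VU.Sk (k'+1)) (VW.Sk (k'+1))
        = ENNReal.ofReal (dHLP (VU.Sk (k'+1)) (VW.Sk (k'+1))) :=
          (ENNReal.ofReal_toReal (eHausLP_Sk_ne_top VU VW (k'+1))).symm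
      _ ≤ ENNReal.ofReal (η / 2) := ENNReal.ofReal_le_ofReal hd
      _ < ENNReal.ofReal η := by
          rw [ENNReal.ofReal_lt_ofReal_iff hη]
          linarith
  constructor
  · refine quotient_transfer hk hW hU hη hη4 ?_
    intro P hPm hPd hPu
    have hmem : Smeasure (volume : Measure unitInterval) P₂ (fInd P) W ∈ VW.Sk (k'+1) :=
      ⟨fInd P, measurable_fInd hPm, fInd_Icc P, rfl⟩
    obtain ⟨ν, hνA, hlt⟩ := exists_close_left heH hmem
    obtain ⟨g, hg, _hIcc, rfl⟩ := hνA
    exact ⟨g, hg, by rwa [levyProkhorovEDist_comm] at hlt⟩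
  · refine quotient_transfer hk hU hW hη hη4 ?_
    intro P hPm hPd hPu
    have hmem : Smeasure (volume : Measure unitInterval) P₂ (fInd P) U ∈ VU.Sk (k'+1) :=
      ⟨fInd P, measurable_fInd hPm, fInd_Icc P, rfl⟩
    obtain ⟨ν, hνB, hlt⟩ := exists_close_right heH hmem
    obtain ⟨g, hg, _hIcc, rfl⟩ := hνB
    exact ⟨g, hg, hlt⟩

end Prf
namespace Prf

lemma part1 : ∀ k : ℕ, 1 ≤ k → ∀ ε > (0 : ℝ), ∃ δ > (0 : ℝ),
    ∀ (Ω₂ : Type u) [MeasurableSpace Ω₂] (P₂ : Measure Ω₂)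
      [IsProbabilityMeasure P₂]
      (U W : unitInterval × unitInterval × Ω₂ → ℝ)
      (hU : Measurable U) (hW : Measurable W),
      dM (PVar.ofUnitInterval P₂ U hU) (PVar.ofUnitInterval P₂ W hW) ≤ δ →
      ((∀ R ∈ Qk (assocGraphon P₂ W) k,
          ∃ R' ∈ Qk (assocGraphon P₂ U) k, d1 R R' ≤ ε) ∧
       (∀ R' ∈ Qk (assocGraphon P₂ U) k,
          ∃ R ∈ Qk (assocGraphon P₂ W) k, d1 R R' ≤ ε) ∧
       d1H (Qk (assocGraphon P₂ W) k) (Qk (assocGraphon P₂ U) k) ≤ ε) := by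
  intro k hk ε hε
  have hk1 : (1:ℝ) ≤ (k:ℝ) := by exact_mod_cast hk
  set C : ℝ := (k*(k+1) : ℝ) + k^2*(2*k+3) with hC
  have hCpos : 0 < C := by nlinarith
  set η : ℝ := min (ε/C) (1/8) with hηdef
  have hη : 0 < η := lt_min (div_pos hε hCpos) (by norm_num)
  have hη4 : η < 1/4 := lt_of_le_of_lt (min_le_right _ _) (by norm_num)
  have hCη : C * η ≤ ε := by
    calc C * η ≤ C * (ε/C) := mul_le_mul_of_nonneg_left (min_le_left _ _) hCpos.le
      _ = ε := by field_simp
  have hCη' : ((k*(k+1) : ℝ) + k^2*(2*k+3)) * η ≤ ε := by rw [← hC]; exact hCη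
  refine ⟨η / 2^(k+1), by positivity, ?_⟩
  intro Ω₂ _ P₂ _ U W hU hW hdM
  obtain ⟨h1, h2⟩ := main_part1 P₂ U W hU hW (by omega : 0 < k) hη hη4 hdM
  have hfwd : ∀ R ∈ Qk (assocGraphon P₂ W) k, ∃ R' ∈ Qk (assocGraphon P₂ U) k,
      d1 R R' ≤ ε := by
    intro R hR
    obtain ⟨R', hR', hd⟩ := h1 R hR
    exact ⟨R', hR', le_trans hd hCη'⟩
  have hbwd : ∀ R' ∈ Qk (assocGraphon P₂ U) k, ∃ R ∈ Qk (assocGraphon P₂ W) k,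
      d1 R R' ≤ ε := by
    intro R' hR'
    obtain ⟨R, hR, hd⟩ := h2 R' hR'
    refine ⟨R, hR, ?_⟩
    rw [d1_comm]
    exact le_trans hd hCη'
  exact ⟨hfwd, hbwd, d1H_le hε.le hfwd hbwd⟩

end Prf

/-- For every `k ≥ 1` and `ε > 0` there is `δ > 0` such that any two
P-variables `U, W` on `[0,1] × [0,1] × Ω₂` with `d_M(U,W) ≤ δ` have quotient sets with
`d_{1,H}(Q_k(W̃), Q_k(Ũ)) ≤ ε` (each quotient of one is `ε`-close in `d₁` to a quotient
of the other, and vice versa).  In particular, if a sequence `(W_n)` of such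
P-variables is Cauchy in `d_M`, then for every `k ≥ 1` the sequence of quotient sets
`(Q_k(W̃_n))` is Cauchy in `d_{1,H}`. -/
theorem quotient_sets_close_of_dM_close :
    (∀ k : ℕ, 1 ≤ k → ∀ ε > (0 : ℝ), ∃ δ > (0 : ℝ),
      ∀ (Ω₂ : Type u) [MeasurableSpace Ω₂] (P₂ : Measure Ω₂)
        [IsProbabilityMeasure P₂]
        (U W : unitInterval × unitInterval × Ω₂ → ℝ)
        (hU : Measurable U) (hW : Measurable W),
        dM (PVar.ofUnitInterval P₂ U hU) (PVar.ofUnitInterval P₂ W hW) ≤ δ →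
        ((∀ R ∈ Qk (assocGraphon P₂ W) k,
            ∃ R' ∈ Qk (assocGraphon P₂ U) k, d1 R R' ≤ ε) ∧
         (∀ R' ∈ Qk (assocGraphon P₂ U) k,
            ∃ R ∈ Qk (assocGraphon P₂ W) k, d1 R R' ≤ ε) ∧
         d1H (Qk (assocGraphon P₂ W) k) (Qk (assocGraphon P₂ U) k) ≤ ε)) ∧
    (∀ (Ω₂ : Type u) [MeasurableSpace Ω₂] (P₂ : Measure Ω₂)
      [IsProbabilityMeasure P₂]
      (W : ℕ → unitInterval × unitInterval × Ω₂ → ℝ) (hW : ∀ n, Measurable (W n)),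
      (∀ ε > (0 : ℝ), ∃ N : ℕ, ∀ m ≥ N, ∀ n ≥ N,
        dM (PVar.ofUnitInterval P₂ (W m) (hW m))
           (PVar.ofUnitInterval P₂ (W n) (hW n)) < ε) →
      ∀ k : ℕ, 1 ≤ k → ∀ ε > (0 : ℝ), ∃ N : ℕ, ∀ m ≥ N, ∀ n ≥ N,
        d1H (Qk (assocGraphon P₂ (W m)) k) (Qk (assocGraphon P₂ (W n)) k) < ε) := by
  refine ⟨Prf.part1, ?_⟩
  intro Ω₂ _ P₂ _ W hW hcauchy k hk ε hε
  obtain ⟨δ, hδpos, hδ⟩ := Prf.part1 k hk (ε/2) (half_pos hε)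
  obtain ⟨N, hN⟩ := hcauchy δ hδpos
  refine ⟨N, fun m hm n hn => ?_⟩
  have h := hδ Ω₂ P₂ (W n) (W m) (hW n) (hW m) (le_of_lt (hN n hn m hm))
  exact lt_of_le_of_lt h.2.2 (half_lt_self hε)

end
end
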